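/- arXiv:2502.08408 — 5 statements merged into one kernel-verified Lean document; each statement's English description precedes it below -/
import Mathlib

section
/- For any τ ≥ 0 and any s > 1/(1+τ), the s-dimensional Hausdorff measure of L(τ) is zero, where L(τ) is the set of x ∈ (0,1] such that 0 < x − P_n(x)/Q_n(x) < 1/Q_n(x)^{1+τ} for infinitely many n. Consequently dim_H L(τ) ≤ 1/(1+τ). -/
open MeasureTheory Filter Set

/-- The Lüroth map `T(x) = ⌊1/x⌋(⌊1/x + 1⌋x − 1)`. -/
noncomputable def lurothT (x : ℝ) : ℝ :=
  (⌊x⁻¹⌋ : ℝ) * (((⌊x⁻¹⌋ : ℝ) + 1) * x - 1)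

/-- The `n`-th Lüroth digit (1-indexed): `d_n(x) = ⌊1/(T^{n-1}x)⌋ + 1`. -/
noncomputable def lurothD (x : ℝ) (n : ℕ) : ℕ :=
  ⌊(lurothT^[n - 1] x)⁻¹⌋₊ + 1

/-- The (unsimplified) denominator `Q_n(x) = d_n ∏_{j=1}^{n-1} d_j(d_j−1)`. -/
noncomputable def lurothQ (x : ℝ) (n : ℕ) : ℕ :=
  lurothD x n * ∏ j ∈ Finset.Ico 1 n, lurothD x j * (lurothD x j - 1)

/-- The `n`-th Lüroth convergent `P_n(x)/Q_n(x) = ∑_{k=1}^n 1/Q_k(x)`. -/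
noncomputable def lurothConv (x : ℝ) (n : ℕ) : ℝ :=
  ∑ k ∈ Finset.Icc 1 n, ((lurothQ x k : ℝ))⁻¹

/-- The (unsimplified) numerator `P_n(x)`. -/
noncomputable def lurothP (x : ℝ) (n : ℕ) : ℝ := lurothConv x n * (lurothQ x n : ℝ)

/-- Lüroth `ψ`-well approximable numbers. -/
def Lpsi (ψ : ℕ → ℝ) : Set ℝ :=
  {x ∈ Set.Ioc (0:ℝ) 1 | ∀ N : ℕ, ∃ n, N ≤ n ∧ 1 ≤ n ∧
    |x - lurothConv x n| < ψ (lurothQ x n) / (lurothQ x n : ℝ)}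

/-- Lüroth `τ`-well approximable numbers. -/
noncomputable def Ltau (τ : ℝ) : Set ℝ :=
  {x ∈ Set.Ioc (0:ℝ) 1 | ∀ N : ℕ, ∃ n, N ≤ n ∧ 1 ≤ n ∧
    |x - lurothConv x n| < ((lurothQ x n : ℝ)) ^ (-(1 + τ))}

/-! ### Auxiliary machinery for the proof -/

open Topology
open scoped ENNReal NNReal Classical

noncomputable section LurothAux

/-- Denominator computed from a 0-indexed digit function. -/
def lQ0 (D : ℕ → ℕ) (k : ℕ) : ℕ := D (k-1) * ∏ j ∈ Finset.range (k-1), (D j * (D j - 1))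

/-- Convergent computed from a 0-indexed digit function. -/
def lconv0 (D : ℕ → ℕ) (n : ℕ) : ℝ := ∑ k ∈ Finset.range n, ((lQ0 D (k+1) : ℝ))⁻¹

lemma lurothQ_eq (x : ℝ) (n : ℕ) : lurothQ x n = lQ0 (fun j => lurothD x (j+1)) n := by
  unfold lurothQ lQ0
  rw [Finset.prod_Ico_eq_prod_range]
  simp [lurothD, Nat.add_sub_cancel, Nat.add_sub_cancel_left]

lemma lurothConv_eq (x : ℝ) (n : ℕ) :
    lurothConv x n = lconv0 (fun j => lurothD x (j+1)) n := by
  unfold lurothConv lconv0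
  have : Finset.Icc 1 n = Finset.Ico 1 (n+1) := by
    rw [Finset.Ico_add_one_right_eq_Icc]
  rw [this, Finset.sum_Ico_eq_sum_range]
  simp only [Nat.add_sub_cancel]
  refine Finset.sum_congr rfl fun k _ => ?_
  rw [lurothQ_eq, Nat.add_comm 1 k]

lemma lQ0_congr {D D' : ℕ → ℕ} {k : ℕ} (h : ∀ j < k, D j = D' j) (hk : 1 ≤ k) :
    lQ0 D k = lQ0 D' k := by
  unfold lQ0
  congr 1
  · exact h _ (by omega)
  · exact Finset.prod_congr rfl fun j hj => by
      rw [h j (by simpa using (Finset.mem_range.mp hj).trans_le (by omega))]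

lemma lconv0_congr {D D' : ℕ → ℕ} {n : ℕ} (h : ∀ j < n, D j = D' j) :
    lconv0 D n = lconv0 D' n := by
  unfold lconv0
  refine Finset.sum_congr rfl fun k hk => ?_
  rw [lQ0_congr (fun j hj => h j (by have := Finset.mem_range.mp hk; omega)) (by omega)]

/-! ### Real comparison series -/

/-- telescoping comparison series `1/(m(m-1))`. -/
def uSer (m : ℕ) : ℝ := if 2 ≤ m then ((m*(m-1) : ℕ) : ℝ)⁻¹ else 0

lemma uSer_partial (N : ℕ) :
    ∑ m ∈ Finset.range (N+2), uSer m = 1 - ((N+1 : ℕ) : ℝ)⁻¹ := by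
  induction N with
  | zero => simp [uSer, Finset.sum_range_succ]
  | succ N ih =>
    rw [Finset.sum_range_succ, ih]
    have h1 : (2:ℕ) ≤ N+2 := by omega
    rw [uSer, if_pos h1]
    have hc : ((N:ℝ)+1) ≠ 0 := by positivity
    have hc2 : ((N:ℝ)+2) ≠ 0 := by positivity
    push_cast
    field_simp
    ring

lemma uSer_hasSum : HasSum uSer 1 := by
  have hnn : ∀ m, 0 ≤ uSer m := by
    intro m; unfold uSer; split <;> positivity
  rw [hasSum_iff_tendsto_nat_of_nonneg hnn]
  rw [← Filter.tendsto_add_atTop_iff_nat 2]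
  simp only [uSer_partial]
  have : Tendsto (fun N : ℕ => ((N+1 : ℕ) : ℝ)⁻¹) atTop (𝓝 0) := by
    simpa [one_div] using tendsto_one_div_add_atTop_nhds_zero_nat (𝕜 := ℝ)
  simpa using (tendsto_const_nhds (x := (1:ℝ))).sub this

section WithA
variable {a : ℝ} (ha : 1 < a)

def tgSer (a : ℝ) (m : ℕ) : ℝ := if 2 ≤ m then ((m*(m-1) : ℕ) : ℝ) ^ (-a) else 0
def thSer (a : ℝ) (m : ℕ) : ℝ := ((m : ℝ) ^ a)⁻¹

include ha

lemma tgSer_le (m : ℕ) : tgSer a m ≤ uSer m := by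
  unfold tgSer uSer
  split
  · rename_i h
    have h1 : (1:ℝ) ≤ ((m*(m-1) : ℕ) : ℝ) := by
      have : 0 < m*(m-1) := Nat.mul_pos (by omega) (by omega)
      exact_mod_cast this
    calc ((m*(m-1) : ℕ) : ℝ) ^ (-a) ≤ ((m*(m-1) : ℕ) : ℝ) ^ (-1 : ℝ) :=
          Real.rpow_le_rpow_of_exponent_le h1 (by linarith)
      _ = ((m*(m-1) : ℕ) : ℝ)⁻¹ := by rw [Real.rpow_neg_one]
  · exact le_refl _

omit ha in
lemma tgSer_nonneg (m : ℕ) : 0 ≤ tgSer a m := by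
  unfold tgSer; split <;> positivity

lemma tgSer_summable : Summable (tgSer a) :=
  Summable.of_nonneg_of_le tgSer_nonneg (tgSer_le ha) uSer_hasSum.summable

lemma tgSer_tsum_lt_one : ∑' m, tgSer a m < 1 := by
  have h2 : tgSer a 2 < uSer 2 := by
    have : ((2*(2-1) : ℕ) : ℝ) = 2 := by norm_num
    simp only [tgSer, uSer, if_pos (le_refl 2), this]
    calc (2:ℝ) ^ (-a) < (2:ℝ) ^ (-1 : ℝ) :=
        Real.rpow_lt_rpow_of_exponent_lt one_lt_two (by linarith)
      _ = 2⁻¹ := by rw [Real.rpow_neg_one]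
  calc ∑' m, tgSer a m < ∑' m, uSer m :=
      Summable.tsum_lt_tsum (tgSer_le ha) h2 (tgSer_summable ha) uSer_hasSum.summable
    _ = 1 := uSer_hasSum.tsum_eq

lemma thSer_summable : Summable (thSer a) := by
  unfold thSer
  exact Real.summable_nat_rpow_inv.mpr ha

end WithA

/-! ### ENNReal series -/

def genS (a : ℝ) (m : ℕ) : ℝ≥0∞ := if 2 ≤ m then ((m*(m-1) : ℕ) : ℝ≥0∞) ^ (-a) else 0
def henS (a : ℝ) (m : ℕ) : ℝ≥0∞ := if 1 ≤ m then ((m : ℕ) : ℝ≥0∞) ^ (-a) else 0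

lemma natCast_rpow_eq_ofReal {k : ℕ} (hk : 0 < k) (y : ℝ) :
    ((k : ℝ≥0∞)) ^ y = ENNReal.ofReal ((k : ℝ) ^ y) := by
  rw [← ENNReal.ofReal_natCast k, ENNReal.ofReal_rpow_of_pos (by exact_mod_cast hk)]

lemma genS_eq (a : ℝ) (m : ℕ) : genS a m = ENNReal.ofReal (tgSer a m) := by
  unfold genS tgSer
  split
  · rename_i h
    exact natCast_rpow_eq_ofReal (Nat.mul_pos (by omega) (by omega)) _
  · simp

lemma henS_eq (a : ℝ) (ha : 0 < a) (m : ℕ) : henS a m = ENNReal.ofReal (thSer a m) := by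
  unfold henS thSer
  split
  · rename_i h
    rw [natCast_rpow_eq_ofReal (by omega) (-a), Real.rpow_neg (Nat.cast_nonneg m)]
  · rename_i h
    have hm : m = 0 := by omega
    subst hm
    simp [Real.zero_rpow (ne_of_gt ha)]

lemma cEN_lt_one {a : ℝ} (ha : 1 < a) : (∑' m, genS a m) < 1 := by
  have : (∑' m, genS a m) = ENNReal.ofReal (∑' m, tgSer a m) := by
    rw [ENNReal.ofReal_tsum_of_nonneg tgSer_nonneg (tgSer_summable ha)]
    exact tsum_congr (genS_eq a)
  rw [this]
  exact ENNReal.ofReal_lt_one.mpr (tgSer_tsum_lt_one ha)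

lemma ZEN_ne_top {a : ℝ} (ha : 1 < a) : (∑' m, henS a m) ≠ ⊤ := by
  have : (∑' m, henS a m) = ENNReal.ofReal (∑' m, thSer a m) := by
    rw [ENNReal.ofReal_tsum_of_nonneg (fun m => by unfold thSer; positivity) (thSer_summable ha)]
    exact tsum_congr (henS_eq a (by linarith))
  rw [this]
  exact ENNReal.ofReal_ne_top

/-! ### tsum over digit sequences -/

lemma prod_ite_zero {ι : Type*} [Fintype ι] (p : ι → Prop) [DecidablePred p] (v : ι → ℝ≥0∞) :
    (∏ j, if p j then v j else 0) = if (∀ j, p j) then ∏ j, v j else 0 := by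
  by_cases h : ∀ j, p j
  · rw [if_pos h]; exact Finset.prod_congr rfl fun j _ => if_pos (h j)
  · rw [if_neg h]
    push_neg at h; obtain ⟨j, hj⟩ := h
    exact Finset.prod_eq_zero (Finset.mem_univ j) (if_neg hj)

lemma tsum_pi_prod : ∀ (n : ℕ) (f : Fin n → ℕ → ℝ≥0∞),
    ∑' d : (Fin n → ℕ), ∏ j, f j (d j) = ∏ j, ∑' x, f j x := by
  intro n
  induction n with
  | zero =>
    intro f
    rw [Finset.univ_eq_empty]
    simp only [Finset.prod_empty]
    rw [tsum_eq_single (fun i => i.elim0) (by intro b hb; exact absurd (funext fun i => i.elim0) hb)]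
  | succ n ih =>
    intro f
    have key : ∀ (m : ℕ) (d : Fin n → ℕ),
        (∏ j, f j ((Fin.cons m d : Fin (n+1) → ℕ) j)) = f 0 m * ∏ j : Fin n, f j.succ (d j) := by
      intro m d
      rw [Fin.prod_univ_succ]
      simp
    calc ∑' d : (Fin (n+1) → ℕ), ∏ j, f j (d j)
        = ∑' p : ℕ × (Fin n → ℕ), ∏ j, f j ((Fin.cons p.1 p.2 : Fin (n+1) → ℕ) j) :=
          ((Fin.consEquiv (fun _ => ℕ)).tsum_eq _).symm
      _ = ∑' (m : ℕ) (d : Fin n → ℕ), f 0 m * ∏ j : Fin n, f j.succ (d j) := by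
          rw [ENNReal.tsum_prod']
          simp only [key]
      _ = (∑' m, f 0 m) * ∏ j : Fin n, ∑' x, f j.succ x := by
          simp only [ENNReal.tsum_mul_left, ← ih (fun j => f j.succ)]
          rw [ENNReal.tsum_mul_right]
      _ = ∏ j, ∑' x, f j x := by rw [Fin.prod_univ_succ]

lemma tsum_tail_geom (c : ℝ≥0∞) (hc : c ≤ 1) (N : ℕ) (hN : 1 ≤ N) :
    ∑' n : ℕ, (if N ≤ n then c ^ (n - 1) else 0) ≤ c ^ (N-1) * (1 - c)⁻¹ := by
  have step1 : ∀ n : ℕ, (if N ≤ n then c ^ (n - 1) else 0)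
      ≤ (if N ≤ n then c ^ (N-1) * c ^ (n - N) else 0) := by
    intro n
    split
    · rename_i h
      rw [← pow_add]
      exact pow_le_pow_right_of_le_one' hc (by omega)
    · exact le_refl _
  calc ∑' n : ℕ, (if N ≤ n then c ^ (n - 1) else 0)
      ≤ ∑' n : ℕ, (if N ≤ n then c ^ (N-1) * c ^ (n - N) else 0) :=
        Summable.tsum_le_tsum step1 ENNReal.summable ENNReal.summable
    _ = ∑' k : ℕ, (if N ≤ N + k then c ^ (N-1) * c ^ (N + k - N) else 0) := by
        refine (Function.Injective.tsum_eq (add_right_injective N) ?_).symm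
        intro x hx
        simp only [Function.mem_support, ne_eq, ite_eq_right_iff, not_forall] at hx
        obtain ⟨hNx, -⟩ := hx
        refine ⟨x - N, ?_⟩
        show N + (x - N) = x
        omega
    _ = c ^ (N-1) * ∑' k : ℕ, c ^ k := by
        rw [← ENNReal.tsum_mul_left]
        congr 1; funext k
        rw [if_pos (by omega)]
        congr 2
        omega
    _ = c ^ (N-1) * (1 - c)⁻¹ := by rw [ENNReal.tsum_geometric]

/-! ### digit sequences, validity and the weight identity -/

def extFn {n : ℕ} (d : Fin n → ℕ) : ℕ → ℕ := fun j => if h : j < n then d ⟨j, h⟩ else 0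

def lValid (n : ℕ) (d : Fin n → ℕ) : Prop :=
  ∀ j : Fin n, if (j:ℕ) < n - 1 then 2 ≤ d j else 1 ≤ d j

lemma lQ0_ext (m : ℕ) (d : Fin (m+1) → ℕ) :
    lQ0 (extFn d) (m+1) = d (Fin.last m) * ∏ j : Fin m, (d j.castSucc * (d j.castSucc - 1)) := by
  unfold lQ0 extFn
  simp only [Nat.add_sub_cancel]
  rw [Finset.prod_range fun j => (if h : j < m+1 then d ⟨j, h⟩ else 0) *
    ((if h : j < m+1 then d ⟨j, h⟩ else 0) - 1)]
  congr 1
  · rw [dif_pos (by omega)]; rfl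
  · refine Finset.prod_congr rfl fun j _ => ?_
    rw [dif_pos (by omega : (j:ℕ) < m+1)]
    rfl

lemma weight_eq_prod (a : ℝ) (m : ℕ) (d : Fin (m+1) → ℕ) :
    (if lValid (m+1) d then ((lQ0 (extFn d) (m+1) : ℝ≥0∞)) ^ (-a) else 0)
      = ∏ j : Fin (m+1), (if (j:ℕ) < m then genS a (d j) else henS a (d j)) := by
  have hstep : ∀ j : Fin (m+1), (if (j:ℕ) < m then genS a (d j) else henS a (d j))
      = (if (if (j:ℕ) < m then 2 ≤ d j else 1 ≤ d j) then
          (if (j:ℕ) < m then ((d j * (d j - 1) : ℕ) : ℝ≥0∞) ^ (-a)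
           else ((d j : ℕ) : ℝ≥0∞) ^ (-a)) else 0) := by
    intro j; by_cases hj : (j:ℕ) < m <;> simp [genS, henS, hj]
  rw [Finset.prod_congr rfl (fun j _ => hstep j), prod_ite_zero]
  have hcond : lValid (m+1) d ↔ ∀ j : Fin (m+1), (if (j:ℕ) < m then 2 ≤ d j else 1 ≤ d j) := by
    unfold lValid
    simp only [Nat.add_sub_cancel]
  by_cases hv : lValid (m+1) d
  · rw [if_pos hv, if_pos (hcond.mp hv)]
    rw [lQ0_ext, Nat.cast_mul,
      ENNReal.mul_rpow_of_ne_top (ENNReal.natCast_ne_top _) (ENNReal.natCast_ne_top _),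
      Nat.cast_prod, ← ENNReal.prod_rpow_of_ne_top (fun i _ => ENNReal.natCast_ne_top _),
      Fin.prod_univ_castSucc]
    have h1 : ∀ j : Fin m,
        (if ((j.castSucc : Fin (m+1)) : ℕ) < m then
            ((d j.castSucc * (d j.castSucc - 1) : ℕ) : ℝ≥0∞) ^ (-a)
          else ((d j.castSucc : ℕ) : ℝ≥0∞) ^ (-a))
        = ((d j.castSucc * (d j.castSucc - 1) : ℕ) : ℝ≥0∞) ^ (-a) :=
      fun j => if_pos (by simpa using j.isLt)
    rw [Finset.prod_congr rfl (fun j _ => h1 j)]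
    rw [if_neg (by simp)]
    exact mul_comm _ _
  · rw [if_neg hv, if_neg (fun h => hv (hcond.mpr h))]

lemma tsum_weight (a : ℝ) (m : ℕ) :
    ∑' d : (Fin (m+1) → ℕ),
        (if lValid (m+1) d then ((lQ0 (extFn d) (m+1) : ℝ≥0∞)) ^ (-a) else 0)
      = (∑' x, genS a x) ^ m * (∑' x, henS a x) := by
  rw [tsum_congr (weight_eq_prod a m)]
  rw [tsum_pi_prod (m+1) (fun j x => if (j:ℕ) < m then genS a x else henS a x)]
  have h2 : ∀ j : Fin (m+1), (∑' x, (if (j:ℕ) < m then genS a x else henS a x))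
      = (if (j:ℕ) < m then (∑' x, genS a x) else (∑' x, henS a x)) := by
    intro j; by_cases hj : (j:ℕ) < m <;> simp [hj]
  rw [Finset.prod_congr rfl (fun j _ => h2 j), Fin.prod_univ_castSucc]
  have h3 : ∀ j : Fin m, (if ((j.castSucc : Fin (m+1)) : ℕ) < m then (∑' x, genS a x)
      else (∑' x, henS a x)) = (∑' x, genS a x) := fun j => if_pos (by simpa using j.isLt)
  rw [Finset.prod_congr rfl (fun j _ => h3 j), if_neg (by simp), Finset.prod_const]
  simp

lemma tsum_weight' (a : ℝ) (n : ℕ) (hn : 1 ≤ n) :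
    ∑' d : (Fin n → ℕ), (if lValid n d then ((lQ0 (extFn d) n : ℝ≥0∞)) ^ (-a) else 0)
      = (∑' x, genS a x) ^ (n-1) * (∑' x, henS a x) := by
  cases n with
  | zero => omega
  | succ m => simpa using tsum_weight a m

/-! ### the covers -/

lemma valid_Q_ge {n : ℕ} (d : Fin n → ℕ) (hv : lValid n d) (hn : 1 ≤ n) :
    2^(n-1) ≤ lQ0 (extFn d) n := by
  cases n with
  | zero => omega
  | succ m =>
    rw [lQ0_ext]
    simp only [Nat.add_sub_cancel]
    have h1 : 1 ≤ d (Fin.last m) := by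
      have := hv (Fin.last m)
      rw [Nat.add_sub_cancel, if_neg (by simp)] at this
      exact this
    have h2 : ∀ j : Fin m, 2 ≤ d j.castSucc * (d j.castSucc - 1) := by
      intro j
      have := hv j.castSucc
      rw [Nat.add_sub_cancel, if_pos (by simpa using j.isLt)] at this
      have : 2 ≤ d j.castSucc := this
      calc 2 = 2 * 1 := by norm_num
        _ ≤ d j.castSucc * (d j.castSucc - 1) := Nat.mul_le_mul this (by omega)
    calc 2^m = ∏ _j : Fin m, 2 := by simp
      _ ≤ ∏ j : Fin m, (d j.castSucc * (d j.castSucc - 1)) := Finset.prod_le_prod' fun j _ => h2 j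
      _ ≤ d (Fin.last m) * ∏ j : Fin m, (d j.castSucc * (d j.castSucc - 1)) :=
          Nat.le_mul_of_pos_left _ (by omega)

/-- The cover of `Ltau τ` at level `N`. -/
def coverSet (τ : ℝ) (N : ℕ) : (Σ n : ℕ, (Fin n → ℕ)) → Set ℝ :=
  fun p => if (N ≤ p.1 ∧ 1 ≤ p.1 ∧ lValid p.1 p.2) then
    Ioo (lconv0 (extFn p.2) p.1 - ((lQ0 (extFn p.2) p.1 : ℝ)) ^ (-(1+τ)))
        (lconv0 (extFn p.2) p.1 + ((lQ0 (extFn p.2) p.1 : ℝ)) ^ (-(1+τ))) else ∅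

lemma cover_subset (τ : ℝ) (hτ : 0 ≤ τ) (N : ℕ) :
    Ltau τ ⊆ ⋃ p, coverSet τ N p := by
  intro x hx
  obtain ⟨-, hx2⟩ := hx
  obtain ⟨n, hn, hn1, hlt⟩ := hx2 (max N 1)
  set d : Fin n → ℕ := fun j => lurothD x ((j:ℕ)+1) with hd
  have hn1' : 1 ≤ n := le_trans (le_max_right N 1) hn
  have hext : ∀ j < n, extFn d j = lurothD x (j+1) := by
    intro j hj; unfold extFn; rw [dif_pos hj]
  have hQ : lQ0 (extFn d) n = lurothQ x n := by
    rw [lurothQ_eq]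
    exact lQ0_congr (fun j hj => hext j hj) hn1'
  have hC : lconv0 (extFn d) n = lurothConv x n := by
    rw [lurothConv_eq]
    exact lconv0_congr (fun j hj => hext j hj)
  have hQ0 : lurothQ x n ≠ 0 := by
    intro h0
    rw [h0] at hlt
    rw [Nat.cast_zero, Real.zero_rpow (by intro h; simp at h; linarith)] at hlt
    exact absurd hlt (not_lt.mpr (abs_nonneg _))
  have hvalid : lValid n d := by
    intro j
    split
    · rename_i hj
      by_contra hlt2
      have hdj : d j = 1 := by
        have : 1 ≤ d j := Nat.le_add_left 1 _
        omega
      apply hQ0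
      unfold lurothQ
      have hmem : (j:ℕ)+1 ∈ Finset.Ico 1 n := Finset.mem_Ico.mpr ⟨by omega, by omega⟩
      rw [Finset.prod_eq_zero (f := fun j => lurothD x j * (lurothD x j - 1)) hmem (by
        have h1 : lurothD x ((j:ℕ)+1) = 1 := hdj
        simp [h1]), mul_zero]
    · exact Nat.le_add_left 1 _
  refine mem_iUnion.mpr ⟨⟨n, d⟩, ?_⟩
  unfold coverSet
  rw [if_pos ⟨le_trans (le_max_left N 1) hn, hn1', hvalid⟩]
  simp only [mem_Ioo]
  rw [hQ, hC]
  have h := abs_lt.mp hlt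
  constructor <;> linarith [h.1, h.2]

lemma cover_diam (τ : ℝ) (hτ : 0 ≤ τ) (N : ℕ) (p : Σ n : ℕ, (Fin n → ℕ)) :
    EMetric.diam (coverSet τ N p) ≤ ENNReal.ofReal (2 * ((2:ℝ)⁻¹) ^ (N-1)) := by
  obtain ⟨n, d⟩ := p
  unfold coverSet
  split
  · rename_i h
    obtain ⟨hNn, hn1, hv⟩ := h
    rw [EMetric.diam, Real.ediam_Ioo]
    refine ENNReal.ofReal_le_ofReal ?_
    have hQ := valid_Q_ge d hv hn1
    have hQ1 : (1:ℝ) ≤ ((lQ0 (extFn d) n : ℕ) : ℝ) := by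
      have : (1:ℕ) ≤ lQ0 (extFn d) n := le_trans (Nat.one_le_two_pow) hQ
      exact_mod_cast this
    have hr : ((lQ0 (extFn d) n : ℕ) : ℝ) ^ (-(1+τ)) ≤ ((2:ℝ)⁻¹) ^ (N-1) := by
      calc ((lQ0 (extFn d) n : ℕ) : ℝ) ^ (-(1+τ))
          ≤ ((lQ0 (extFn d) n : ℕ) : ℝ) ^ (-1 : ℝ) :=
            Real.rpow_le_rpow_of_exponent_le hQ1 (by linarith)
        _ = (((lQ0 (extFn d) n : ℕ) : ℝ))⁻¹ := Real.rpow_neg_one _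
        _ ≤ (((2:ℕ)^(n-1) : ℕ) : ℝ)⁻¹ := by
            apply inv_anti₀
            · positivity
            · exact_mod_cast hQ
        _ = ((2:ℝ)⁻¹) ^ (n-1) := by
            push_cast
            rw [inv_pow]
        _ ≤ ((2:ℝ)⁻¹) ^ (N-1) :=
            pow_le_pow_of_le_one (by norm_num) (by norm_num) (Nat.sub_le_sub_right hNn 1)
    linarith
  · simp [EMetric.diam]

end LurothAux

/-! ### Main theorem -/

theorem luroth_key (τ s : ℝ) (hτ : 0 ≤ τ) (hs : 1 / (1 + τ) < s) :
    μH[s] (Ltau τ) = 0 := by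
  have h1τ : 0 < 1 + τ := by linarith
  set a := s * (1+τ) with ha_def
  have ha : 1 < a := by
    rw [div_lt_iff₀ h1τ] at hs
    linarith
  have hs0 : 0 < s := lt_trans (by positivity) hs
  obtain ⟨c, hc_def⟩ : ∃ c, c = ∑' x, genS a x := ⟨_, rfl⟩
  obtain ⟨Z, hZ_def⟩ : ∃ Z, Z = ∑' x, henS a x := ⟨_, rfl⟩
  have hc1 : c < 1 := hc_def ▸ cEN_lt_one ha
  have hZ : Z ≠ ⊤ := hZ_def ▸ ZEN_ne_top ha
  obtain ⟨K, hK_def⟩ : ∃ K, K = ENNReal.ofReal ((2:ℝ) ^ s) := ⟨_, rfl⟩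
  have hK : K ≠ ⊤ := hK_def ▸ ENNReal.ofReal_ne_top
  -- pointwise bound on each cover piece
  have hpt : ∀ N n (d : Fin n → ℕ),
      (EMetric.diam (coverSet τ N ⟨n, d⟩)) ^ s ≤
        (if N ≤ n ∧ 1 ≤ n then
          K * (if lValid n d then ((lQ0 (extFn d) n : ℝ≥0∞)) ^ (-a) else 0) else 0) := by
    intro N n d
    by_cases h : N ≤ n ∧ 1 ≤ n ∧ lValid n d
    · obtain ⟨hNn, hn1, hv⟩ := h
      have hQpos : 0 < lQ0 (extFn d) n := lt_of_lt_of_le (Nat.pow_pos (by norm_num))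
        (valid_Q_ge d hv hn1)
      have hQR : (0:ℝ) < ((lQ0 (extFn d) n : ℕ) : ℝ) := by exact_mod_cast hQpos
      have hrpos : (0:ℝ) < ((lQ0 (extFn d) n : ℕ) : ℝ) ^ (-(1+τ)) :=
        Real.rpow_pos_of_pos hQR _
      rw [hK_def]
      unfold coverSet
      rw [if_pos ⟨hNn, hn1, hv⟩, EMetric.diam, Real.ediam_Ioo]
      have h2r : (lconv0 (extFn d) n + ((lQ0 (extFn d) n : ℕ) : ℝ) ^ (-(1+τ)))
          - (lconv0 (extFn d) n - ((lQ0 (extFn d) n : ℕ) : ℝ) ^ (-(1+τ)))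
          = 2 * ((lQ0 (extFn d) n : ℕ) : ℝ) ^ (-(1+τ)) := by ring
      rw [h2r, if_pos ⟨hNn, hn1⟩, if_pos hv]
      rw [ENNReal.ofReal_rpow_of_pos (by positivity)]
      rw [Real.mul_rpow (by norm_num) (le_of_lt hrpos)]
      rw [← Real.rpow_mul hQR.le]
      have hexp : (-(1+τ))*s = -a := by rw [ha_def]; ring
      rw [hexp]
      rw [ENNReal.ofReal_mul (by positivity : (0:ℝ) ≤ (2:ℝ)^s)]
      rw [← natCast_rpow_eq_ofReal hQpos (-a)]
    · have hdiam : EMetric.diam (coverSet τ N ⟨n, d⟩) = 0 := by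
        unfold coverSet
        rw [if_neg (by tauto)]
        exact EMetric.diam_empty
      rw [hdiam, ENNReal.zero_rpow_of_pos hs0]
      exact zero_le
  -- per-level tsum bound
  have hn_tsum : ∀ N n, ∑' d : (Fin n → ℕ), (EMetric.diam (coverSet τ N ⟨n, d⟩)) ^ s
      ≤ (if N ≤ n then (K*Z) * c ^ (n-1) else 0) := by
    intro N n
    calc ∑' d : (Fin n → ℕ), (EMetric.diam (coverSet τ N ⟨n, d⟩)) ^ s
        ≤ ∑' d : (Fin n → ℕ), (if N ≤ n ∧ 1 ≤ n then
            K * (if lValid n d then ((lQ0 (extFn d) n : ℝ≥0∞)) ^ (-a) else 0) else 0) :=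
          Summable.tsum_le_tsum (fun d => hpt N n d) ENNReal.summable ENNReal.summable
      _ ≤ (if N ≤ n then (K*Z) * c ^ (n-1) else 0) := by
          by_cases h : N ≤ n ∧ 1 ≤ n
          · simp only [if_pos h]
            rw [ENNReal.tsum_mul_left, tsum_weight' a n h.2, if_pos h.1, ← hc_def, ← hZ_def]
            exact le_of_eq (by ring)
          · simp only [if_neg h, tsum_zero]
            exact zero_le
  -- total bound
  have htot : ∀ N, 1 ≤ N → ∑' p : (Σ n : ℕ, (Fin n → ℕ)), (EMetric.diam (coverSet τ N p)) ^ s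
      ≤ (K*Z*(1-c)⁻¹) * c ^ (N-1) := by
    intro N hN
    rw [ENNReal.tsum_sigma']
    calc (∑' n, ∑' d : (Fin n → ℕ), (EMetric.diam (coverSet τ N ⟨n, d⟩)) ^ s)
        ≤ ∑' n, (if N ≤ n then (K*Z) * c ^ (n-1) else 0) :=
          Summable.tsum_le_tsum (fun n => hn_tsum N n) ENNReal.summable ENNReal.summable
      _ = (K*Z) * ∑' n, (if N ≤ n then c ^ (n-1) else 0) := by
          have hsplit : ∀ n : ℕ, (if N ≤ n then (K*Z) * c ^ (n-1) else 0)
              = (K*Z) * (if N ≤ n then c ^ (n-1) else 0) := by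
            intro n; split <;> simp
          rw [tsum_congr hsplit, ENNReal.tsum_mul_left]
      _ ≤ (K*Z) * (c ^ (N-1) * (1-c)⁻¹) :=
          mul_le_mul_right (tsum_tail_geom c hc1.le N hN) _
      _ = (K*Z*(1-c)⁻¹) * c ^ (N-1) := by ring
  -- Hausdorff measure bound via liminf of covers
  have hμ : μH[s] (Ltau τ) ≤ liminf (fun N : ℕ => ∑' p : (Σ n : ℕ, (Fin n → ℕ)),
      (EMetric.diam (coverSet τ N p)) ^ s) atTop := by
    refine MeasureTheory.Measure.hausdorffMeasure_le_liminf_tsum s (Ltau τ)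
      (fun N => ENNReal.ofReal (2 * ((2:ℝ)⁻¹) ^ (N-1))) ?_ (fun N => coverSet τ N)
      (Eventually.of_forall fun N => cover_diam τ hτ N)
      (Eventually.of_forall fun N => cover_subset τ hτ N)
    have hre : Tendsto (fun N : ℕ => 2 * ((2:ℝ)⁻¹) ^ (N-1)) atTop (𝓝 0) := by
      have h2 : Tendsto (fun N : ℕ => ((2:ℝ)⁻¹) ^ N) atTop (𝓝 0) :=
        tendsto_pow_atTop_nhds_zero_of_lt_one (by norm_num) (by norm_num)
      have h3 : Tendsto (fun N : ℕ => ((2:ℝ)⁻¹) ^ (N-1)) atTop (𝓝 0) := by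
        rw [← Filter.tendsto_add_atTop_iff_nat 1]
        simpa using h2
      simpa using h3.const_mul 2
    have := ENNReal.tendsto_ofReal (a := (0:ℝ)) hre
    simpa using this
  refine le_antisymm ?_ (zero_le)
  refine hμ.trans ?_
  have hev : (fun N : ℕ => ∑' p : (Σ n : ℕ, (Fin n → ℕ)), (EMetric.diam (coverSet τ N p)) ^ s)
      ≤ᶠ[atTop] fun N : ℕ => (K*Z*(1-c)⁻¹) * c ^ (N-1) :=
    eventually_atTop.mpr ⟨1, fun N hN => htot N hN⟩
  calc liminf (fun N : ℕ => ∑' p : (Σ n : ℕ, (Fin n → ℕ)),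
        (EMetric.diam (coverSet τ N p)) ^ s) atTop
      ≤ liminf (fun N : ℕ => (K*Z*(1-c)⁻¹) * c ^ (N-1)) atTop := liminf_le_liminf hev
    _ = 0 := by
        have hconst : (K*Z*(1-c)⁻¹) ≠ ⊤ := by
          refine ENNReal.mul_ne_top (ENNReal.mul_ne_top hK hZ) ?_
          rw [ENNReal.inv_ne_top]
          exact (tsub_pos_of_lt hc1).ne'
        have hpow : Tendsto (fun N : ℕ => c ^ (N-1)) atTop (𝓝 0) := by
          rw [← Filter.tendsto_add_atTop_iff_nat 1]
          simpa using ENNReal.tendsto_pow_atTop_nhds_zero_of_lt_one hc1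
        have hlim := ENNReal.Tendsto.const_mul hpow (Or.inr hconst)
        rw [mul_zero] at hlim
        exact hlim.liminf_eq

theorem stmt7 (τ s : ℝ) (hτ : 0 ≤ τ) (hs : 1 / (1 + τ) < s) :
    μH[s] (Ltau τ) = 0 ∧ dimH (Ltau τ) ≤ ENNReal.ofReal (1 / (1 + τ)) := by
  refine ⟨luroth_key τ s hτ hs, ?_⟩
  by_contra hcon
  push_neg at hcon
  obtain ⟨r, hr1, hr2⟩ := (ENNReal.lt_iff_exists_nnreal_btwn).mp hcon
  have h0le : (0:ℝ) ≤ 1 / (1 + τ) := by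
    apply div_nonneg <;> linarith
  have hsr : 1 / (1 + τ) < (r : ℝ) := by
    rw [← ENNReal.ofReal_coe_nnreal] at hr1
    exact (ENNReal.ofReal_lt_ofReal_iff_of_nonneg h0le).mp hr1
  have h0 : μH[(r : ℝ)] (Ltau τ) = 0 := luroth_key τ r hτ hsr
  have hd : dimH (Ltau τ) ≤ (r : ℝ≥0∞) :=
    dimH_le_of_hausdorffMeasure_ne_top (by rw [h0]; exact ENNReal.zero_ne_top)
  exact absurd hr2 (not_lt.mpr hd)
end

section
/- Every irrational x in (0,1] has infinitely many Lüroth digits d_n(x) ≥ 3, and consequently for infinitely many n, 0 < x − P_n(x)/Q_n(x) < 1/Q_n(x). In particular, the set of irrationals in (0,1] is contained in L(0), so dim_H L(0) = 1. -/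
open MeasureTheory Filter Set

noncomputable def lurothR (x : ℝ) (n : ℕ) : ℕ :=
  ∏ j ∈ Finset.Icc 1 n, lurothD x j * (lurothD x j - 1)

lemma lurothT_step (y : ℝ) (hy : Irrational y) (h0 : 0 < y) (h1 : y < 1) :
    Irrational (lurothT y) ∧ 0 < lurothT y ∧ lurothT y < 1 := by
  have hinv : 1 < y⁻¹ := (one_lt_inv₀ h0).2 h1
  set a : ℤ := ⌊y⁻¹⌋ with ha
  have ha1 : (1:ℤ) ≤ a := Int.le_floor.2 (by exact_mod_cast hinv.le)
  have ha1' : (1:ℝ) ≤ (a:ℝ) := by exact_mod_cast ha1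
  have hlt : (a:ℝ) < y⁻¹ := lt_of_le_of_ne (Int.floor_le _) ((hy.inv.ne_int a).symm)
  have hub : y⁻¹ < (a:ℝ) + 1 := Int.lt_floor_add_one _
  have hay : (a:ℝ) * y < 1 := by
    calc (a:ℝ) * y < y⁻¹ * y := by exact mul_lt_mul_of_pos_right hlt h0
    _ = 1 := inv_mul_cancel₀ h0.ne'
  have hay' : 1 < ((a:ℝ) + 1) * y := by
    calc (1:ℝ) = y⁻¹ * y := (inv_mul_cancel₀ h0.ne').symm
    _ < ((a:ℝ)+1) * y := mul_lt_mul_of_pos_right hub h0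
  refine ⟨?_, ?_, ?_⟩
  · have hform : lurothT y = ((a * (a+1) : ℤ) : ℝ) * y - ((a : ℤ) : ℝ) := by
      unfold lurothT; push_cast; ring
    rw [hform]
    exact ((Irrational.intCast_mul hy (by nlinarith)).sub_intCast a)
  · unfold lurothT
    have : (0:ℝ) < (a:ℝ) := by linarith
    nlinarith
  · unfold lurothT
    nlinarith

lemma luroth_iter (x : ℝ) (hx : Irrational x) (h0 : 0 < x) (h1 : x < 1) (n : ℕ) :
    Irrational (lurothT^[n] x) ∧ 0 < lurothT^[n] x ∧ lurothT^[n] x < 1 := by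
  induction n with
  | zero => exact ⟨hx, h0, h1⟩
  | succ m ih =>
    rw [Function.iterate_succ_apply']
    exact lurothT_step _ ih.1 ih.2.1 ih.2.2

lemma lurothD_ge_two (x : ℝ) (hx : Irrational x) (h0 : 0 < x) (h1 : x < 1) (n : ℕ) :
    2 ≤ lurothD x n := by
  obtain ⟨hi, hp, hl⟩ := luroth_iter x hx h0 h1 (n - 1)
  have : 1 ≤ (lurothT^[n-1] x)⁻¹ := (one_le_inv₀ hp).2 hl.le
  have : 1 ≤ ⌊(lurothT^[n-1] x)⁻¹⌋₊ := Nat.le_floor (by exact_mod_cast this)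
  unfold lurothD; omega

lemma lurothR_pos (x : ℝ) (hx : Irrational x) (h0 : 0 < x) (h1 : x < 1) (n : ℕ) :
    0 < lurothR x n := by
  unfold lurothR
  apply Finset.prod_pos
  intro j hj
  have := lurothD_ge_two x hx h0 h1 j
  have h2 : 1 ≤ lurothD x j - 1 := by omega
  exact Nat.mul_pos (by omega) h2

lemma lurothQ_eq_s9 (x : ℝ) (m : ℕ) :
    lurothQ x (m+1) = lurothD x (m+1) * lurothR x m := by
  unfold lurothQ lurothR
  rw [Finset.Ico_add_one_right_eq_Icc]

lemma lurothR_succ (x : ℝ) (m : ℕ) :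
    lurothR x (m+1) = lurothR x m * (lurothD x (m+1) * (lurothD x (m+1) - 1)) := by
  unfold lurothR
  rw [Finset.prod_Icc_succ_top (Nat.succ_le_succ (Nat.zero_le m))]

lemma lurothR_eq_Q (x : ℝ) (m : ℕ) :
    lurothR x (m+1) = lurothQ x (m+1) * (lurothD x (m+1) - 1) := by
  rw [lurothR_succ, lurothQ_eq_s9]; ring

lemma luroth_key_s9 (x : ℝ) (hx : Irrational x) (h0 : 0 < x) (h1 : x < 1) (n : ℕ) :
    x - lurothConv x n = lurothT^[n] x / (lurothR x n : ℝ) := by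
  induction n with
  | zero => simp [lurothConv, lurothR]
  | succ m ih =>
    obtain ⟨hyi, hy0, hy1⟩ := luroth_iter x hx h0 h1 m
    set y := lurothT^[m] x with hy
    set d := lurothD x (m+1) with hd
    have hd2 : 2 ≤ d := lurothD_ge_two x hx h0 h1 (m+1)
    have hdf : d = ⌊y⁻¹⌋₊ + 1 := by simp [hd, lurothD, hy]
    have hinv0 : (0:ℝ) ≤ y⁻¹ := by positivity
    have hfl : (⌊y⁻¹⌋ : ℝ) = (⌊y⁻¹⌋₊ : ℝ) := (natCast_floor_eq_intCast_floor hinv0).symm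
    have hTy : lurothT y = ((d:ℝ) - 1) * ((d:ℝ) * y - 1) := by
      unfold lurothT
      rw [hfl, hdf]; push_cast; ring
    have hRpos : (0:ℝ) < (lurothR x m : ℝ) := by
      exact_mod_cast lurothR_pos x hx h0 h1 m
    have hdpos : (0:ℝ) < (d:ℝ) := by positivity
    have hd1 : (0:ℝ) < (d:ℝ) - 1 := by
      have : (2:ℝ) ≤ (d:ℝ) := by exact_mod_cast hd2
      linarith
    have hQ : (lurothQ x (m+1) : ℝ) = (d:ℝ) * (lurothR x m : ℝ) := by
      rw [lurothQ_eq_s9]; push_cast; ring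
    have hR : (lurothR x (m+1) : ℝ) = (lurothR x m : ℝ) * ((d:ℝ) * ((d:ℝ) - 1)) := by
      rw [lurothR_succ, ← hd]
      push_cast [Nat.cast_sub (show 1 ≤ d by omega)]
      ring
    have hconv : lurothConv x (m+1) = lurothConv x m + ((lurothQ x (m+1):ℝ))⁻¹ := by
      unfold lurothConv
      rw [Finset.sum_Icc_succ_top (Nat.succ_le_succ (Nat.zero_le m))]
    rw [Function.iterate_succ_apply', ← hy, hTy, hconv, hR, hQ]
    have hih : x - lurothConv x m = y / (lurothR x m : ℝ) := ih
    have hx' : x = y / (lurothR x m : ℝ) + lurothConv x m := by linarith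
    have key2 : ((d:ℝ) - 1) * ((d:ℝ) * y - 1) / ((lurothR x m : ℝ) * ((d:ℝ) * ((d:ℝ) - 1)))
        = y / (lurothR x m : ℝ) - ((d:ℝ) * (lurothR x m : ℝ))⁻¹ := by
      field_simp
    rw [key2]
    linarith

lemma luroth_bounds (x : ℝ) (hx : Irrational x) (h0 : 0 < x) (h1 : x < 1) (n : ℕ)
    (hn : 1 ≤ n) :
    0 < x - lurothConv x n ∧ x - lurothConv x n < 1 / (lurothQ x n : ℝ) := by
  obtain ⟨m, rfl⟩ : ∃ m, n = m + 1 := ⟨n - 1, by omega⟩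
  obtain ⟨hyi, hy0, hy1⟩ := luroth_iter x hx h0 h1 (m+1)
  have hRpos : (0:ℝ) < (lurothR x (m+1) : ℝ) := by
    exact_mod_cast lurothR_pos x hx h0 h1 (m+1)
  have hQpos : 0 < lurothQ x (m+1) := by
    rw [lurothQ_eq_s9]
    exact Nat.mul_pos (by have := lurothD_ge_two x hx h0 h1 (m+1); omega)
      (lurothR_pos x hx h0 h1 m)
  have hQR : lurothQ x (m+1) ≤ lurothR x (m+1) := by
    rw [lurothR_eq_Q]
    have := lurothD_ge_two x hx h0 h1 (m+1)
    exact Nat.le_mul_of_pos_right _ (by omega)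
  have hQR' : (lurothQ x (m+1) : ℝ) ≤ (lurothR x (m+1) : ℝ) := by exact_mod_cast hQR
  have hQpos' : (0:ℝ) < (lurothQ x (m+1) : ℝ) := by exact_mod_cast hQpos
  rw [luroth_key_s9 x hx h0 h1 (m+1)]
  constructor
  · exact div_pos hy0 hRpos
  · calc lurothT^[m+1] x / (lurothR x (m+1) : ℝ)
        < 1 / (lurothR x (m+1) : ℝ) := by
          gcongr
    _ ≤ 1 / (lurothQ x (m+1) : ℝ) := one_div_le_one_div_of_le hQpos' hQR'

lemma luroth_not_ev_two (x : ℝ) (hx : Irrational x) (h0 : 0 < x) (h1 : x < 1) (m₀ : ℕ)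
    (h : ∀ m, m₀ ≤ m → ⌊(lurothT^[m] x)⁻¹⌋₊ = 1) : False := by
  have key : ∀ k : ℕ, 1 - lurothT^[m₀ + k] x = 2 ^ k * (1 - lurothT^[m₀] x) := by
    intro k
    induction k with
    | zero => simp
    | succ j ih =>
      obtain ⟨hyi, hy0, hy1⟩ := luroth_iter x hx h0 h1 (m₀ + j)
      set y := lurothT^[m₀ + j] x with hy
      have hinv0 : (0:ℝ) ≤ y⁻¹ := by positivity
      have hfl : (⌊y⁻¹⌋ : ℝ) = (⌊y⁻¹⌋₊ : ℝ) := (natCast_floor_eq_intCast_floor hinv0).symm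
      have hone : (⌊y⁻¹⌋₊ : ℝ) = 1 := by
        rw [h (m₀ + j) (Nat.le_add_right _ _)]; norm_num
    /- T y = 2y - 1 -/
      have hTy : lurothT y = 2 * y - 1 := by
        unfold lurothT; rw [hfl, hone]; ring
      have hstep : lurothT^[m₀ + (j+1)] x = lurothT y := by
        rw [show m₀ + (j+1) = (m₀ + j) + 1 by omega, Function.iterate_succ_apply']
      rw [hstep, hTy]
      have : 1 - (2 * y - 1) = 2 * (1 - y) := by ring
      rw [this, ih]
      ring
  obtain ⟨_, _, hlt⟩ := luroth_iter x hx h0 h1 m₀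
  set ε := 1 - lurothT^[m₀] x with hε
  have hεpos : 0 < ε := by simp [hε]; linarith
  obtain ⟨k, hk⟩ := pow_unbounded_of_one_lt (1/ε) (one_lt_two (α := ℝ))
  obtain ⟨_, hp, _⟩ := luroth_iter x hx h0 h1 (m₀ + k)
  have h2 : 1 - lurothT^[m₀ + k] x = 2 ^ k * ε := key k
  have : (1:ℝ) < 2 ^ k * ε := by
    rw [div_lt_iff₀ hεpos] at hk
    linarith
  linarith

theorem luroth_main (x : ℝ) (hmem : x ∈ Set.Ioc (0:ℝ) 1) (hirr : Irrational x) :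
      {n : ℕ | 1 ≤ n ∧ 3 ≤ lurothD x n}.Infinite ∧
      {n : ℕ | 1 ≤ n ∧ 0 < x - lurothConv x n ∧
        x - lurothConv x n < 1 / (lurothQ x n : ℝ)}.Infinite := by
  have h0 : 0 < x := hmem.1
  have h1 : x < 1 := lt_of_le_of_ne hmem.2 hirr.ne_one
  constructor
  · by_contra hfin
    rw [Set.not_infinite] at hfin
    obtain ⟨N, hN⟩ := hfin.bddAbove
    refine luroth_not_ev_two x hirr h0 h1 (N + 1) (fun m hm => ?_)
    have hd2 := lurothD_ge_two x hirr h0 h1 (m + 1)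
    have hd3 : ¬ (3 ≤ lurothD x (m+1)) := by
      intro h3
      have : m + 1 ≤ N := hN ⟨by omega, h3⟩
      omega
    have hdeq : lurothD x (m+1) = 2 := by omega
    have : lurothD x (m+1) = ⌊(lurothT^[m] x)⁻¹⌋₊ + 1 := by simp [lurothD]
    omega
  · apply Set.Infinite.mono (s := Set.Ici 1) _ (Set.Ici_infinite 1)
    intro n hn
    obtain ⟨hp, hb⟩ := luroth_bounds x hirr h0 h1 n hn
    exact ⟨hn, hp, hb⟩

lemma irr_subset_Ltau : {x ∈ Set.Ioc (0:ℝ) 1 | Irrational x} ⊆ Ltau 0 := by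
  rintro x ⟨hmem, hirr⟩
  have h0 : 0 < x := hmem.1
  have h1 : x < 1 := lt_of_le_of_ne hmem.2 hirr.ne_one
  refine ⟨hmem, fun N => ⟨max N 1, le_max_left _ _, le_max_right _ _, ?_⟩⟩
  set n := max N 1
  obtain ⟨hp, hb⟩ := luroth_bounds x hirr h0 h1 n (le_max_right _ _)
  have hQpos : 0 < lurothQ x n := by
    obtain ⟨m, hm⟩ : ∃ m, n = m + 1 := ⟨n - 1, by omega⟩
    rw [hm, lurothQ_eq_s9]
    exact Nat.mul_pos (by have := lurothD_ge_two x hirr h0 h1 (m+1); omega)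
      (lurothR_pos x hirr h0 h1 m)
  have hQpos' : (0:ℝ) < (lurothQ x n : ℝ) := by exact_mod_cast hQpos
  have hrpow : ((lurothQ x n : ℝ)) ^ (-(1 + (0:ℝ))) = ((lurothQ x n : ℝ))⁻¹ := by
    norm_num
    exact Real.rpow_neg_one _
  rw [hrpow, abs_of_pos hp]
  rw [one_div] at hb
  exact hb

lemma dimH_Ltau : dimH (Ltau 0) = 1 := by
  refine le_antisymm ?_ ?_
  · calc dimH (Ltau 0) ≤ dimH (Set.univ : Set ℝ) := dimH_mono (Set.subset_univ _)
    _ = 1 := Real.dimH_univ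
  · have hIoc : dimH (Set.Ioc (0:ℝ) 1) = 1 := by
      have : dimH (Set.Ioc (0:ℝ) 1) = Module.finrank ℝ ℝ := by
        apply Real.dimH_of_nonempty_interior
        rw [interior_Ioc]
        exact ⟨1/2, by norm_num⟩
      rw [this, Module.finrank_self, Nat.cast_one]
    have hsplit : Set.Ioc (0:ℝ) 1 ⊆
        {x ∈ Set.Ioc (0:ℝ) 1 | Irrational x} ∪ Set.range ((↑) : ℚ → ℝ) := by
      intro x hx
      by_cases h : Irrational x
      · exact Or.inl ⟨hx, h⟩
      · exact Or.inr (not_not.mp h)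
    have hrat : dimH (Set.range ((↑) : ℚ → ℝ)) = 0 :=
      dimH_countable (Set.countable_range _)
    have hmono := dimH_mono hsplit
    rw [dimH_union, hrat, hIoc, max_eq_left zero_le] at hmono
    exact le_trans hmono (dimH_mono irr_subset_Ltau)

theorem stmt9 :
    (∀ x ∈ Set.Ioc (0:ℝ) 1, Irrational x →
      {n : ℕ | 1 ≤ n ∧ 3 ≤ lurothD x n}.Infinite ∧
      {n : ℕ | 1 ≤ n ∧ 0 < x - lurothConv x n ∧
        x - lurothConv x n < 1 / (lurothQ x n : ℝ)}.Infinite) ∧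
    {x ∈ Set.Ioc (0:ℝ) 1 | Irrational x} ⊆ Ltau 0 ∧
    dimH (Ltau 0) = 1 :=
  ⟨fun x hmem hirr => luroth_main x hmem hirr, irr_subset_Ltau, dimH_Ltau⟩
end

section
/- Fix τ ≥ 0 and define ψ(q) = q^{−(τ + ν₂(q))} where ν₂ is the 2-adic valuation. Then dim_H L(ψ) = 0, even though the lower order τ̲_ψ equals τ (so 1/(1+τ̲_ψ) > 0). Hence the conjecture dim_H L(ψ) = 1/(1+τ̲_ψ) fails without monotonicity of ψ. -/
open MeasureTheory Filter Set
open scoped ENNReal NNReal Topology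

lemma lurothD_pos (x : ℝ) (n : ℕ) : 1 ≤ lurothD x n := Nat.le_add_left 1 _

lemma lurothQ_dvd (x : ℝ) {k n : ℕ} (hk : 1 ≤ k) (hkn : k ≤ n) :
    lurothQ x k ∣ lurothQ x n := by
  rcases eq_or_lt_of_le hkn with rfl | h
  · exact dvd_rfl
  · refine ⟨(lurothD x k - 1) * lurothD x n *
      ∏ j ∈ Finset.Ico (k+1) n, lurothD x j * (lurothD x j - 1), ?_⟩
    unfold lurothQ
    rw [← Finset.prod_Ico_consecutive _ hk h.le, Finset.prod_eq_prod_Ico_succ_bot h]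
    ring

lemma two_le_lurothD (x : ℝ) {n : ℕ} (hQ : lurothQ x n ≠ 0) {j : ℕ}
    (hj : j ∈ Finset.Ico 1 n) : 2 ≤ lurothD x j := by
  by_contra h
  push_neg at h
  have hD1 : lurothD x j = 1 := le_antisymm (Nat.lt_succ_iff.mp h) (lurothD_pos x j)
  apply hQ
  unfold lurothQ
  exact mul_eq_zero_of_right _ (Finset.prod_eq_zero hj (by simp [hD1]))

lemma two_pow_dvd_lurothQ (x : ℝ) {n : ℕ} (hQ : lurothQ x n ≠ 0) :
    2 ^ (n - 1) ∣ lurothQ x n := by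
  have h : (2:ℕ) ^ (n-1) ∣ ∏ j ∈ Finset.Ico 1 n, lurothD x j * (lurothD x j - 1) := by
    have hcard : (Finset.Ico 1 n).card = n - 1 := by simp
    calc (2:ℕ) ^ (n-1) = ∏ _j ∈ Finset.Ico 1 n, 2 := by rw [Finset.prod_const, hcard]
    _ ∣ _ := by
        apply Finset.prod_dvd_prod_of_dvd
        intro j hj
        have h2 := two_le_lurothD x hQ hj
        have he : lurothD x j * (lurothD x j - 1)
            = (lurothD x j - 1) * ((lurothD x j - 1) + 1) := by
          rw [Nat.sub_add_cancel (le_trans one_le_two h2)]; ring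
        rw [he]
        exact (Nat.even_mul_succ_self _).two_dvd
  exact h.mul_left _

lemma two_pow_le_lurothQ (x : ℝ) {n : ℕ} (hQ : lurothQ x n ≠ 0) :
    2 ^ (n - 1) ≤ lurothQ x n :=
  Nat.le_of_dvd (Nat.pos_of_ne_zero hQ) (two_pow_dvd_lurothQ x hQ)

lemma lurothConv_le_two (x : ℝ) {n : ℕ} (hQ : lurothQ x n ≠ 0) :
    lurothConv x n ≤ 2 := by
  have hterm : ∀ k ∈ Finset.Icc 1 n, ((lurothQ x k : ℝ))⁻¹ ≤ (1/2 : ℝ) ^ (k - 1) := by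
    intro k hk
    rw [Finset.mem_Icc] at hk
    have hdvd := lurothQ_dvd x hk.1 hk.2
    have hQk : lurothQ x k ≠ 0 := fun h0 => hQ (by
      rcases hdvd with ⟨c, hc⟩; rw [hc, h0, zero_mul])
    have hle : (2:ℕ) ^ (k-1) ≤ lurothQ x k := two_pow_le_lurothQ x hQk
    have hpos : (0:ℝ) < 2 ^ (k-1) := by positivity
    have : ((2:ℝ) ^ (k-1))⁻¹ = (1/2 : ℝ) ^ (k-1) := by
      rw [one_div, inv_pow]
    rw [← this]
    apply inv_anti₀ hpos
    exact_mod_cast hle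
  calc lurothConv x n ≤ ∑ k ∈ Finset.Icc 1 n, (1/2 : ℝ) ^ (k - 1) :=
        Finset.sum_le_sum hterm
    _ ≤ 2 := by
        rw [← Finset.Ico_add_one_right_eq_Icc, Finset.sum_Ico_eq_sum_range]
        have h1 : ∀ i ∈ Finset.range (n + 1 - 1), (1/2:ℝ) ^ (1 + i - 1) = (1/2:ℝ) ^ i := by
          intro i _; congr 1; omega
        rw [Finset.sum_congr rfl h1]
        have h2 : ∑ i ∈ Finset.range (n+1-1), (1/2:ℝ)^i
            = ((1/2:ℝ)^(n+1-1) - 1) / ((1/2:ℝ) - 1) := geom_sum_eq (by norm_num) _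
        rw [h2]
        have h3 : (0:ℝ) ≤ (1/2:ℝ)^(n+1-1) := by positivity
        have h4 : (1/2:ℝ)^(n+1-1) ≤ 1 := by
          apply pow_le_one₀ <;> norm_num
        rw [div_le_iff_of_neg (by norm_num)]
        nlinarith

lemma lurothNum (x : ℝ) {n : ℕ} (hQ : lurothQ x n ≠ 0) :
    ∃ m : ℕ, (m : ℝ) = lurothConv x n * (lurothQ x n : ℝ) ∧ m ≤ 2 * lurothQ x n := by
  set m : ℕ := ∑ k ∈ Finset.Icc 1 n, lurothQ x n / lurothQ x k with hm
  have hcast : (m : ℝ) = lurothConv x n * (lurothQ x n : ℝ) := by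
    rw [hm]
    push_cast
    have hterm : ∀ k ∈ Finset.Icc 1 n,
        ((lurothQ x n / lurothQ x k : ℕ) : ℝ) = ((lurothQ x k : ℝ))⁻¹ * (lurothQ x n : ℝ) := by
      intro k hk
      rw [Finset.mem_Icc] at hk
      have hdvd := lurothQ_dvd x hk.1 hk.2
      have hQk : lurothQ x k ≠ 0 := fun h0 => hQ (by
        rcases hdvd with ⟨c, hc⟩; rw [hc, h0, zero_mul])
      rw [Nat.cast_div hdvd (by exact_mod_cast hQk), div_eq_inv_mul]
    rw [Finset.sum_congr rfl hterm, ← Finset.sum_mul]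
    rfl
  refine ⟨m, hcast, ?_⟩
  have h2 : (m : ℝ) ≤ 2 * (lurothQ x n : ℝ) := by
    rw [hcast]
    exact mul_le_mul_of_nonneg_right (lurothConv_le_two x hQ) (Nat.cast_nonneg _)
  exact_mod_cast h2

lemma lurothKey {τ : ℝ} (hτ : 0 ≤ τ) {ψ : ℕ → ℝ}
    (hψ : ∀ q, ψ q = (q : ℝ) ^ (-(τ + (padicValNat 2 q : ℝ)))) {x : ℝ}
    (hx : x ∈ Lpsi ψ) (j N : ℕ) (hN : 1 ≤ N) :
    ∃ q m : ℕ, N ≤ q ∧ m ≤ 2 * q ∧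
      |x - (m : ℝ) / q| < (q : ℝ) ^ (-(1 + (j:ℝ))) := by
  obtain ⟨n, hn1, hn2, hcond⟩ := hx.2 (max N (j + 1))
  set Q := lurothQ x n with hQdef
  -- Q ≠ 0
  have hQ : Q ≠ 0 := by
    intro h0
    rw [h0] at hcond
    simp only [Nat.cast_zero, div_zero] at hcond
    exact absurd hcond (not_lt.mpr (abs_nonneg _))
  have hQpos : 0 < Q := Nat.pos_of_ne_zero hQ
  -- 2^(n-1) ∣ Q so padicValNat 2 Q ≥ n - 1 ≥ j
  haveI : Fact (Nat.Prime 2) := ⟨Nat.prime_two⟩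
  have hval : n - 1 ≤ padicValNat 2 Q := by
    have := (padicValNat_dvd_iff (n-1) Q).mp (two_pow_dvd_lurothQ x hQ)
    tauto
  have hjval : (j : ℝ) ≤ (padicValNat 2 Q : ℝ) := by
    have hj : j ≤ padicValNat 2 Q := le_trans (by omega : j ≤ n - 1) hval
    exact_mod_cast hj
  -- Q ≥ N
  have hNQ : N ≤ Q := by
    have h1 : n ≤ 2 ^ (n - 1) := by
      have := Nat.lt_two_pow_self (n := n - 1)
      omega
    have h2 := two_pow_le_lurothQ x hQ
    omega
  -- Q ≥ 1 so (Q:ℝ) ≥ 1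
  have hQ1 : (1:ℝ) ≤ (Q:ℝ) := by exact_mod_cast hQpos
  -- estimate the RHS
  have hrhs : ψ Q / (Q:ℝ) ≤ (Q:ℝ) ^ (-(1 + (j:ℝ))) := by
    rw [hψ Q]
    have e1 : (Q:ℝ) ^ (-(τ + (padicValNat 2 Q : ℝ))) / (Q:ℝ)
        = (Q:ℝ) ^ (-(τ + (padicValNat 2 Q : ℝ)) - 1) := by
      rw [Real.rpow_sub (by linarith), Real.rpow_one]
    rw [e1]
    apply Real.rpow_le_rpow_of_exponent_le hQ1
    linarith
  obtain ⟨m, hmcast, hmle⟩ := lurothNum x hQ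
  refine ⟨Q, m, hNQ, hmle, ?_⟩
  have hconv : (m : ℝ) / (Q : ℝ) = lurothConv x n := by
    rw [hmcast, mul_div_assoc, div_self (by positivity), mul_one]
  rw [hconv]
  exact lt_of_lt_of_le hcond hrhs

lemma lurothSummable (j : ℕ) {d : ℝ} (hd : 0 < d) (hjd : 3 ≤ d * (1 + j)) :
    Summable (fun q : ℕ => (2*(q:ℝ)+1) * (2 * (q:ℝ) ^ (-(1 + (j:ℝ))))^d) := by
  apply Summable.of_nonneg_of_le (f := fun q : ℕ => (3 * 2^d) * (q:ℝ) ^ (-2:ℝ))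
  · intro q
    positivity
  · intro q
    rcases Nat.eq_zero_or_pos q with rfl | hq
    · have hne : -(1 + (j:ℝ)) ≠ 0 := by
        have h0 : (0:ℝ) < 1 + (j:ℝ) := by positivity
        intro h; rw [neg_eq_zero] at h; exact h0.ne' h
      have h1 : ((0:ℕ):ℝ) ^ (-(1 + (j:ℝ))) = 0 := by
        rw [Nat.cast_zero, Real.zero_rpow hne]
      have h2 : ((0:ℕ):ℝ) ^ (-2:ℝ) = 0 := by
        rw [Nat.cast_zero, Real.zero_rpow (by norm_num)]
      rw [h1, h2, mul_zero, Real.zero_rpow hd.ne', mul_zero, mul_zero]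
    · have hq1 : (1:ℝ) ≤ (q:ℝ) := by exact_mod_cast hq
      have hqpos : (0:ℝ) < q := by linarith
      have e1 : (2 * (q:ℝ) ^ (-(1 + (j:ℝ))))^d
          = 2^d * (q:ℝ) ^ ((-(1 + (j:ℝ))) * d) := by
        rw [Real.mul_rpow (by norm_num) (by positivity), Real.rpow_mul (le_of_lt hqpos)]
      rw [e1]
      have e2 : (2*(q:ℝ)+1) * (2^d * (q:ℝ) ^ ((-(1 + (j:ℝ))) * d))
          ≤ (3*(q:ℝ)) * (2^d * (q:ℝ) ^ ((-(1 + (j:ℝ))) * d)) := by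
        apply mul_le_mul_of_nonneg_right (by linarith) (by positivity)
      refine e2.trans ?_
      have e3 : (3*(q:ℝ)) * (2^d * (q:ℝ) ^ ((-(1 + (j:ℝ))) * d))
          = (3 * 2^d) * (q:ℝ) ^ (1 + (-(1 + (j:ℝ))) * d) := by
        rw [Real.rpow_add hqpos, Real.rpow_one]; ring
      rw [e3]
      apply mul_le_mul_of_nonneg_left _ (by positivity)
      apply Real.rpow_le_rpow_of_exponent_le hq1
      nlinarith
  · exact (Real.summable_nat_rpow.mpr (by norm_num)).mul_left _


noncomputable def lurothCover (j N : ℕ) (p : ℕ × ℕ) : Set ℝ :=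
  if p.2 ≤ 2 * (p.1 + N) then
    Metric.ball ((p.2 : ℝ) / ((p.1 + N : ℕ) : ℝ)) (((p.1 + N : ℕ) : ℝ) ^ (-(1 + (j:ℝ))))
  else ∅

lemma lurothCover_eq (j N k m : ℕ) : lurothCover j N (k, m) =
    if m ≤ 2 * (k + N) then
      Metric.ball ((m : ℝ) / ((k + N : ℕ) : ℝ)) (((k + N : ℕ) : ℝ) ^ (-(1 + (j:ℝ))))
    else ∅ := rfl

set_option maxHeartbeats 1000000 in
lemma lurothMuH {τ : ℝ} (hτ : 0 ≤ τ) {ψ : ℕ → ℝ}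
    (hψ : ∀ q, ψ q = (q : ℝ) ^ (-(τ + (padicValNat 2 q : ℝ))))
    {d : ℝ} (hd : 0 < d) : μH[d] (Lpsi ψ) = 0 := by
  obtain ⟨j, hj⟩ := exists_nat_ge (3 / d)
  have hjd : 3 ≤ d * (1 + (j:ℝ)) := by
    have h1 : 3 / d ≤ (j:ℝ) := hj
    have h2 : 3 ≤ d * j := by
      rw [div_le_iff₀ hd] at h1; linarith [h1]
    nlinarith
  have hradle : ∀ q : ℕ, 1 ≤ q → ((q:ℕ):ℝ) ^ (-(1 + (j:ℝ))) ≤ ((q:ℕ):ℝ)⁻¹ := by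
    intro q hq
    have hq1 : (1:ℝ) ≤ (q:ℝ) := by exact_mod_cast hq
    have := Real.rpow_le_rpow_of_exponent_le hq1
      (by have : (0:ℝ) ≤ (j:ℝ) := Nat.cast_nonneg _; linarith : -(1 + (j:ℝ)) ≤ (-1 : ℝ))
    rwa [Real.rpow_neg_one] at this
  -- radii tend to zero
  have hr0 : Tendsto (fun N : ℕ => ENNReal.ofReal (2 / N)) atTop (𝓝 0) := by
    have h0 : Tendsto (fun N : ℕ => 2 / (N:ℝ)) atTop (𝓝 0) :=
      tendsto_const_div_atTop_nhds_zero_nat 2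
    have := ENNReal.tendsto_ofReal h0
    simpa using this
  -- diameters bounded
  have hdiam : ∀ᶠ N in atTop, ∀ i : ℕ × ℕ,
      EMetric.diam (lurothCover j N i) ≤ ENNReal.ofReal (2 / N) := by
    filter_upwards [eventually_ge_atTop 1] with N hN
    rintro ⟨k, m⟩
    rw [lurothCover_eq]
    have hq : 1 ≤ k + N := le_add_self.trans' hN
    split_ifs with hm
    · rw [← Metric.emetric_ball]
      refine le_trans EMetric.diam_ball ?_
      rw [← ENNReal.ofReal_ofNat, ← ENNReal.ofReal_mul (by norm_num)]
      apply ENNReal.ofReal_le_ofReal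
      have h1 := hradle (k+N) hq
      have h2 : ((k+N:ℕ):ℝ)⁻¹ ≤ ((N:ℕ):ℝ)⁻¹ := by
        apply inv_anti₀
        · exact_mod_cast hN
        · exact_mod_cast le_add_self
      have h3 : (0:ℝ) < N := by exact_mod_cast hN
      rw [div_eq_mul_inv]
      exact mul_le_mul_of_nonneg_left (h1.trans h2) (by norm_num)
    · simp [EMetric.diam]
  -- covering
  have hcover : ∀ᶠ N in atTop, Lpsi ψ ⊆ ⋃ i : ℕ × ℕ, lurothCover j N i := by
    filter_upwards [eventually_ge_atTop 1] with N hN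
    intro x hx
    obtain ⟨q, m, hqN, hm, hball⟩ := lurothKey hτ hψ hx j N hN
    rw [mem_iUnion]
    refine ⟨(q - N, m), ?_⟩
    rw [lurothCover_eq]
    have hqe : q - N + N = q := Nat.sub_add_cancel hqN
    rw [hqe, if_pos (by omega : m ≤ 2 * q)]
    rw [Metric.mem_ball, Real.dist_eq]
    exact hball
  have hcov := Measure.hausdorffMeasure_le_liminf_tsum (X := ℝ) (l := atTop) d (Lpsi ψ)
    (fun N : ℕ => ENNReal.ofReal (2 / N)) hr0 (lurothCover j) hdiam hcover
  -- bound the liminf by a tail sum that tends to 0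
  set a : ℕ → ℝ≥0∞ := fun q =>
    ENNReal.ofReal ((2*(q:ℝ)+1) * (2 * (q:ℝ) ^ (-(1 + (j:ℝ))))^d) with ha_def
  have hsum : ∑' q, a q ≠ ∞ := by
    rw [← ENNReal.ofReal_tsum_of_nonneg (fun q => by positivity)
      (lurothSummable j hd hjd)]
    exact ENNReal.ofReal_ne_top
  have htail : Tendsto (fun N => ∑' k, a (k + N)) atTop (𝓝 0) :=
    ENNReal.tendsto_sum_nat_add a hsum
  have hFG : ∀ N : ℕ, (∑' i : ℕ × ℕ, EMetric.diam (lurothCover j N i) ^ d)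
      ≤ ∑' k, a (k + N) := by
    intro N
    have hps : (∑' i : ℕ × ℕ, EMetric.diam (lurothCover j N i) ^ d)
        = ∑' (k : ℕ) (m : ℕ), EMetric.diam (lurothCover j N (k, m)) ^ d :=
      ENNReal.tsum_prod (f := fun k m => EMetric.diam (lurothCover j N (k, m)) ^ d)
    rw [hps]
    apply ENNReal.tsum_le_tsum
    intro k
    set q := k + N with hq_def
    have hterm : ∀ m : ℕ, EMetric.diam (lurothCover j N (k, m)) ^ d ≤
        (if m ≤ 2 * q then
          ENNReal.ofReal ((2 * ((q:ℕ):ℝ) ^ (-(1 + (j:ℝ))))^d) else 0) := by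
      intro m
      rw [lurothCover_eq]
      split_ifs with hm
      · rw [← Metric.emetric_ball]
        refine le_trans (ENNReal.rpow_le_rpow EMetric.diam_ball hd.le) (le_of_eq ?_)
        rw [← ENNReal.ofReal_rpow_of_nonneg (by positivity) hd.le,
          ENNReal.ofReal_mul (by norm_num), ENNReal.ofReal_ofNat]
      · simp [EMetric.diam, EMetric.diam_empty, ENNReal.zero_rpow_of_pos hd]
    calc (∑' m : ℕ, EMetric.diam (lurothCover j N (k, m)) ^ d)
        ≤ ∑' m : ℕ, (if m ≤ 2 * q then
            ENNReal.ofReal ((2 * ((q:ℕ):ℝ) ^ (-(1 + (j:ℝ))))^d) else 0) :=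
          ENNReal.tsum_le_tsum hterm
      _ = ∑ m ∈ Finset.range (2*q+1), (if m ≤ 2 * q then
            ENNReal.ofReal ((2 * ((q:ℕ):ℝ) ^ (-(1 + (j:ℝ))))^d) else 0) := by
          apply tsum_eq_sum
          intro m hm
          rw [Finset.mem_range] at hm
          rw [if_neg (by omega)]
      _ = (2*q+1 : ℕ) • ENNReal.ofReal ((2 * ((q:ℕ):ℝ) ^ (-(1 + (j:ℝ))))^d) := by
          rw [Finset.sum_congr rfl (fun m hm => if_pos (by
            rw [Finset.mem_range] at hm; omega)), Finset.sum_const, Finset.card_range]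
      _ = a q := by
          show _ = ENNReal.ofReal ((2*(q:ℝ)+1) * (2 * (q:ℝ) ^ (-(1 + (j:ℝ))))^d)
          rw [nsmul_eq_mul, ENNReal.ofReal_mul (by positivity)]
          congr 1
          rw [← ENNReal.ofReal_natCast]
          congr 1
          push_cast
          ring
  have hlim : liminf (fun N => ∑' i : ℕ × ℕ, EMetric.diam (lurothCover j N i) ^ d) atTop
      ≤ 0 := by
    have := liminf_le_liminf (f := atTop) (Eventually.of_forall hFG)
      (by isBoundedDefault) (by isBoundedDefault)
    rw [htail.liminf_eq] at this
    exact this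
  exact le_antisymm (hcov.trans hlim) zero_le

theorem stmt15 (τ : ℝ) (hτ : 0 ≤ τ) (ψ : ℕ → ℝ)
    (hψ : ∀ q, ψ q = (q : ℝ) ^ (-(τ + (padicValNat 2 q : ℝ)))) :
    dimH (Lpsi ψ) = 0 ∧
    liminf (fun q : ℕ => -Real.log (ψ q) / Real.log q) atTop = τ ∧
    dimH (Lpsi ψ) ≠ ENNReal.ofReal (1 / (1 + τ)) := by
  have hdim : dimH (Lpsi ψ) = 0 := by
    by_contra h
    have hpos : 0 < dimH (Lpsi ψ) := pos_iff_ne_zero.mpr h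
    obtain ⟨r, hr0, hrlt⟩ := ENNReal.lt_iff_exists_nnreal_btwn.mp hpos
    have hle : dimH (Lpsi ψ) ≤ r := by
      apply dimH_le_of_hausdorffMeasure_ne_top
      rw [lurothMuH hτ hψ (show (0:ℝ) < (r:ℝ) by exact_mod_cast ENNReal.coe_pos.mp hr0)]
      exact ENNReal.zero_ne_top
    exact absurd (lt_of_le_of_lt hle hrlt) (lt_irrefl _)
  have hev : ∀ q : ℕ, 2 ≤ q →
      -Real.log (ψ q) / Real.log q = τ + (padicValNat 2 q : ℝ) := by
    intro q hq
    have hq0 : (0:ℝ) < q := by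
      have : (2:ℝ) ≤ q := by exact_mod_cast hq
      linarith
    have hq1 : (1:ℝ) < q := by
      have : (2:ℝ) ≤ q := by exact_mod_cast hq
      linarith
    have hlog : Real.log q ≠ 0 := ne_of_gt (Real.log_pos hq1)
    rw [hψ q, Real.log_rpow hq0,
      show -(-(τ + (padicValNat 2 q : ℝ)) * Real.log q)
        = (τ + (padicValNat 2 q : ℝ)) * Real.log q by ring,
      mul_div_cancel_right₀ _ hlog]
  have hge : ∀ᶠ q : ℕ in atTop, τ ≤ -Real.log (ψ q) / Real.log q := by
    filter_upwards [eventually_ge_atTop 2] with q hq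
    rw [hev q hq]
    have : (0:ℝ) ≤ (padicValNat 2 q : ℝ) := Nat.cast_nonneg _
    linarith
  have hfreq : ∃ᶠ q : ℕ in atTop, -Real.log (ψ q) / Real.log q ≤ τ := by
    rw [frequently_atTop]
    intro a
    refine ⟨2*a+3, by omega, ?_⟩
    rw [hev _ (by omega), padicValNat.eq_zero_of_not_dvd (by omega)]
    simp
  have hlim : liminf (fun q : ℕ => -Real.log (ψ q) / Real.log q) atTop = τ := by
    refine le_antisymm (liminf_le_of_frequently_le hfreq ⟨τ, eventually_map.2 hge⟩) ?_
    exact le_liminf_of_le (IsCoboundedUnder.of_frequently_le hfreq) hge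
  refine ⟨hdim, hlim, ?_⟩
  rw [hdim]
  have h1 : (0:ℝ) < 1 / (1 + τ) := by
    have : (0:ℝ) < 1 + τ := by linarith
    positivity
  exact (ENNReal.ofReal_pos.mpr h1).ne'.symm
end

section
/- Let ψ: ℕ → (0,1] be a function with liminf_{q→∞}(−log ψ(q))/log q > 1. Then there exists q₀ ∈ ℕ such that ψ(q) < 1/q for all q > q₀, and the set L(ψ) equals the limsup over the countable family of Lüroth rational data (P_k, Q_k, d_k) of the intervals (P_k/Q_k, P_k/Q_k + ψ(Q_k)/Q_k). -/
open MeasureTheory Filter Set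

lemma luroth_inv_ge {x : ℝ} (hx : x ∈ Set.Ioc (0:ℝ) 1) : 1 ≤ x⁻¹ :=
  (one_le_inv_iff₀).mpr ⟨hx.1, hx.2⟩

lemma lurothT_mem {x : ℝ} (hx : x ∈ Set.Ioc (0:ℝ) 1) : lurothT x ∈ Set.Ioc (0:ℝ) 1 := by
  obtain ⟨hx0, hx1⟩ := hx
  have hinv : 1 ≤ x⁻¹ := luroth_inv_ge ⟨hx0, hx1⟩
  have ha1 : (1:ℤ) ≤ ⌊x⁻¹⌋ := by
    exact_mod_cast Int.le_floor.mpr (by exact_mod_cast hinv)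
  have ha1' : (1:ℝ) ≤ (⌊x⁻¹⌋ : ℝ) := by exact_mod_cast ha1
  have h2 : (⌊x⁻¹⌋ : ℝ) ≤ x⁻¹ := Int.floor_le _
  have h3 : x⁻¹ < (⌊x⁻¹⌋ : ℝ) + 1 := Int.lt_floor_add_one _
  have h4 : (⌊x⁻¹⌋ : ℝ) * x ≤ 1 := by
    have := mul_le_mul_of_nonneg_right h2 hx0.le
    rwa [inv_mul_cancel₀ hx0.ne'] at this
  have h5 : 1 < ((⌊x⁻¹⌋ : ℝ) + 1) * x := by
    have := mul_lt_mul_of_pos_right h3 hx0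
    rwa [inv_mul_cancel₀ hx0.ne'] at this
  constructor
  · unfold lurothT
    have : 0 < ((⌊x⁻¹⌋ : ℝ) + 1) * x - 1 := by linarith
    positivity
  · unfold lurothT
    nlinarith [mul_le_mul_of_nonneg_left h4 (by linarith : (0:ℝ) ≤ (⌊x⁻¹⌋ : ℝ))]

lemma lurothT_iter_mem {x : ℝ} (hx : x ∈ Set.Ioc (0:ℝ) 1) (n : ℕ) :
    lurothT^[n] x ∈ Set.Ioc (0:ℝ) 1 := by
  induction n with
  | zero => simpa using hx
  | succ n ih => rw [Function.iterate_succ_apply']; exact lurothT_mem ih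

lemma lurothD_ge {x : ℝ} (hx : x ∈ Set.Ioc (0:ℝ) 1) (n : ℕ) : 2 ≤ lurothD x n := by
  have h := lurothT_iter_mem hx (n - 1)
  have : (1:ℕ) ≤ ⌊(lurothT^[n-1] x)⁻¹⌋₊ :=
    Nat.le_floor (by exact_mod_cast luroth_inv_ge h)
  unfold lurothD; omega

lemma luroth_step {y : ℝ} (hy : y ∈ Set.Ioc (0:ℝ) 1) :
    y = ((lurothD y 1 : ℝ))⁻¹ +
      lurothT y / ((lurothD y 1 : ℝ) * ((lurothD y 1 : ℝ) - 1)) := by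
  have hinv : 1 ≤ y⁻¹ := luroth_inv_ge hy
  have hfl : ((⌊y⁻¹⌋ : ℤ) : ℝ) = (⌊y⁻¹⌋₊ : ℝ) := by
    rw [← Int.floor_toNat y⁻¹]
    exact_mod_cast congrArg (fun z : ℤ => (z : ℝ))
      (Int.toNat_of_nonneg (Int.floor_nonneg.mpr (by linarith))).symm
  have hd : lurothD y 1 = ⌊y⁻¹⌋₊ + 1 := rfl
  have hd2 : 2 ≤ lurothD y 1 := lurothD_ge hy 1
  have hdr : ((lurothD y 1 : ℝ)) - 1 = (⌊y⁻¹⌋₊ : ℝ) := by rw [hd]; push_cast; ring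
  have hdne : (lurothD y 1 : ℝ) ≠ 0 := by positivity
  have hdne1 : (lurothD y 1 : ℝ) - 1 ≠ 0 := by
    have : (2:ℝ) ≤ (lurothD y 1 : ℝ) := by exact_mod_cast hd2
    intro hc; linarith
  have hT : lurothT y = ((lurothD y 1 : ℝ) - 1) * ((lurothD y 1 : ℝ) * y - 1) := by
    unfold lurothT
    rw [hfl, ← hdr]
    ring
  have hy0 := hy.1
  field_simp [hT]
  rw [hT]; ring

def Qg (d : ℕ → ℕ) (n : ℕ) : ℕ := d n * ∏ j ∈ Finset.Ico 1 n, d j * (d j - 1)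
def Pg (d : ℕ → ℕ) (n : ℕ) : ℕ := ∏ j ∈ Finset.Icc 1 n, d j * (d j - 1)
noncomputable def Cg (d : ℕ → ℕ) (n : ℕ) : ℝ := ∑ k ∈ Finset.Icc 1 n, ((Qg d k : ℕ) : ℝ)⁻¹

lemma lurothQ_eq_s16 (x : ℝ) (n : ℕ) : lurothD x n * ∏ j ∈ Finset.Ico 1 n,
    lurothD x j * (lurothD x j - 1) = Qg (lurothD x) n := rfl

lemma Pg_succ (d : ℕ → ℕ) (n : ℕ) :
    Pg d (n+1) = Pg d n * (d (n+1) * (d (n+1) - 1)) := by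
  unfold Pg
  rw [← Finset.Ico_add_one_right_eq_Icc, Finset.prod_Ico_succ_top (by omega), Finset.Ico_add_one_right_eq_Icc]

lemma Qg_succ (d : ℕ → ℕ) (n : ℕ) : Qg d (n+1) = d (n+1) * Pg d n := by
  unfold Qg Pg
  rw [Finset.Ico_add_one_right_eq_Icc]

lemma Cg_succ (d : ℕ → ℕ) (n : ℕ) : Cg d (n+1) = Cg d n + ((Qg d (n+1) : ℕ) : ℝ)⁻¹ := by
  unfold Cg
  rw [← Finset.Ico_add_one_right_eq_Icc, Finset.sum_Ico_succ_top (by omega), Finset.Ico_add_one_right_eq_Icc]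

lemma Pg_pos {d : ℕ → ℕ} {n : ℕ} (hd : ∀ i ∈ Finset.Icc 1 n, 2 ≤ d i) : 0 < Pg d n := by
  apply Finset.prod_pos
  intro i hi
  have h2 := hd i hi
  exact Nat.mul_pos (by omega) (by omega)

lemma Qg_pos {d : ℕ → ℕ} {n : ℕ} (hn : 1 ≤ n) (hd : ∀ i ∈ Finset.Icc 1 n, 2 ≤ d i) :
    0 < Qg d n := by
  unfold Qg
  apply Nat.mul_pos
  · have := hd n (by simp [hn]); omega
  · apply Finset.prod_pos
    intro i hi
    simp only [Finset.mem_Ico] at hi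
    have h2 := hd i (by simp only [Finset.mem_Icc]; omega)
    exact Nat.mul_pos (by omega) (by omega)

lemma luroth_ident {x : ℝ} (hx : x ∈ Set.Ioc (0:ℝ) 1) (n : ℕ) :
    x = Cg (lurothD x) n + lurothT^[n] x * ((Pg (lurothD x) n : ℝ))⁻¹ := by
  induction n with
  | zero => simp [Cg, Pg]
  | succ n ih =>
    have hy := lurothT_iter_mem hx n
    set y := lurothT^[n] x with hydef
    have hdy : lurothD y 1 = lurothD x (n+1) := by
      unfold lurothD
      simp [hydef, ← Function.iterate_add_apply]
    have hstep := luroth_step hy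
    rw [hdy] at hstep
    set d' := lurothD x (n+1) with hd'
    have hd2 : 2 ≤ d' := lurothD_ge hx (n+1)
    have hd2r : (2:ℝ) ≤ (d' : ℝ) := by exact_mod_cast hd2
    have hPpos : (0:ℝ) < (Pg (lurothD x) n : ℝ) := by
      exact_mod_cast Pg_pos (fun i _ => lurothD_ge hx i)
    have hTy : lurothT y = lurothT^[n+1] x := (Function.iterate_succ_apply' _ _ _).symm
    rw [Cg_succ, Qg_succ]
    have hcast1 : ((d' * Pg (lurothD x) n : ℕ) : ℝ) = (d' : ℝ) * (Pg (lurothD x) n : ℝ) := by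
      push_cast; ring
    have hcast2 : ((Pg (lurothD x) (n+1) : ℕ) : ℝ)
        = (Pg (lurothD x) n : ℝ) * ((d' : ℝ) * ((d' : ℝ) - 1)) := by
      rw [Pg_succ, ← hd']
      push_cast [Nat.cast_sub (by omega : 1 ≤ d')]
      ring
    rw [hcast1, hcast2]
    have h1 : (d' : ℝ) ≠ 0 := by linarith
    have h2 : (d' : ℝ) - 1 ≠ 0 := by linarith
    have hPne : (Pg (lurothD x) n : ℝ) ≠ 0 := ne_of_gt hPpos
    have key : ((d' : ℝ)⁻¹ + lurothT^[n+1] x / ((d' : ℝ) * ((d' : ℝ) - 1)))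
          * ((Pg (lurothD x) n : ℝ))⁻¹
        = ((d' : ℝ) * (Pg (lurothD x) n : ℝ))⁻¹
          + lurothT^[n+1] x * ((Pg (lurothD x) n : ℝ) * ((d' : ℝ) * ((d' : ℝ) - 1)))⁻¹ := by
      field_simp
    rw [hstep, hTy] at ih
    linarith [ih, key]

lemma Qg_congr {d e : ℕ → ℕ} {k : ℕ} (h : ∀ i ∈ Finset.Icc 1 k, d i = e i) (hk : 1 ≤ k) :
    Qg d k = Qg e k := by
  unfold Qg
  rw [h k (by simp [hk])]
  congr 1
  apply Finset.prod_congr rfl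
  intro j hj
  simp only [Finset.mem_Ico] at hj
  rw [h j (by simp only [Finset.mem_Icc]; omega)]

lemma Cg_congr {d e : ℕ → ℕ} {n : ℕ} (h : ∀ i ∈ Finset.Icc 1 n, d i = e i) :
    Cg d n = Cg e n := by
  unfold Cg
  apply Finset.sum_congr rfl
  intro k hk
  simp only [Finset.mem_Icc] at hk
  rw [Qg_congr (fun i hi => h i (by simp only [Finset.mem_Icc] at hi ⊢; omega)) hk.1]

lemma Pg_congr {d e : ℕ → ℕ} {n : ℕ} (h : ∀ i ∈ Finset.Icc 1 n, d i = e i) :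
    Pg d n = Pg e n := by
  unfold Pg
  apply Finset.prod_congr rfl
  intro j hj
  rw [h j hj]

lemma luroth_determine : ∀ (n : ℕ) (d : ℕ → ℕ), (∀ i ∈ Finset.Icc 1 n, 2 ≤ d i) →
    ∀ x : ℝ, Cg d n < x → x ≤ Cg d n + ((Pg d n : ℕ) : ℝ)⁻¹ →
    x ∈ Set.Ioc (0:ℝ) 1 ∧ ∀ i ∈ Finset.Icc 1 n, lurothD x i = d i := by
  intro n
  induction n with
  | zero =>
    intro d _ x h1 h2
    refine ⟨⟨by simpa [Cg] using h1, by simpa [Cg, Pg] using h2⟩, by simp⟩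
  | succ n ih =>
    intro d hd x hx1 hx2
    have hdn : ∀ i ∈ Finset.Icc 1 n, 2 ≤ d i := fun i hi => hd i (by
      simp only [Finset.mem_Icc] at hi ⊢; omega)
    have hd2 : 2 ≤ d (n+1) := hd (n+1) (by simp)
    have hd2r : (2:ℝ) ≤ (d (n+1) : ℝ) := by exact_mod_cast hd2
    set d' : ℝ := (d (n+1) : ℝ) with hd'def
    have hPpos : (0:ℝ) < (Pg d n : ℝ) := by exact_mod_cast Pg_pos hdn
    set P : ℝ := (Pg d n : ℝ) with hPdef
    have hQcast : ((Qg d (n+1) : ℕ) : ℝ) = d' * P := by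
      rw [Qg_succ]; push_cast; ring
    have hPcast : ((Pg d (n+1) : ℕ) : ℝ) = P * (d' * (d' - 1)) := by
      rw [Pg_succ]
      push_cast [Nat.cast_sub (by omega : 1 ≤ d (n+1))]
      ring
    have hd'pos : (0:ℝ) < d' := by linarith
    have hd1pos : (0:ℝ) < d' - 1 := by linarith
    rw [Cg_succ, hQcast] at hx1
    rw [Cg_succ, hQcast, hPcast] at hx2
    -- interval inclusion for first n digits
    have hinc2 : (d' * P)⁻¹ + (P * (d' * (d' - 1)))⁻¹ = P⁻¹ * (d' - 1)⁻¹ := by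
      field_simp
      ring
    have hub : x ≤ Cg d n + P⁻¹ := by
      have h1 : P⁻¹ * (d' - 1)⁻¹ ≤ P⁻¹ := by
        have : (d' - 1)⁻¹ ≤ 1 := by
          rw [inv_le_one_iff₀]; right; linarith
        nlinarith [inv_pos.mpr hPpos]
      linarith
    have hlb : Cg d n < x := by
      have : (0:ℝ) < (d' * P)⁻¹ := by positivity
      linarith
    obtain ⟨hx01, hdig⟩ := ih d hdn x hlb hub
    -- identity for x at level n
    have hCgeq : Cg (lurothD x) n = Cg d n := Cg_congr hdig
    have hPgeq : Pg (lurothD x) n = Pg d n := Pg_congr hdig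
    have hid := luroth_ident hx01 n
    rw [hCgeq, hPgeq] at hid
    set t : ℝ := lurothT^[n] x with htdef
    have hPinv : P⁻¹ * P = 1 := inv_mul_cancel₀ (ne_of_gt hPpos)
    have ht_eq : t = (x - Cg d n) * P := by
      have : x * P = (Cg d n) * P + t * (P⁻¹ * P) := by rw [hid]; ring
      rw [hPinv] at this
      nlinarith [this]
    -- bounds on t
    have ht_lb : d'⁻¹ < t := by
      rw [ht_eq]
      have h1 : (d' * P)⁻¹ * P = d'⁻¹ := by
        rw [mul_inv]
        calc d'⁻¹ * P⁻¹ * P = d'⁻¹ * (P⁻¹ * P) := by ring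
        _ = d'⁻¹ := by rw [hPinv, mul_one]
      have h3 : (d' * P)⁻¹ < x - Cg d n := by linarith
      have h4 := mul_lt_mul_of_pos_right h3 hPpos
      rwa [h1] at h4
    have ht_ub : t ≤ (d' - 1)⁻¹ := by
      rw [ht_eq]
      have h2 : ((d' * P)⁻¹ + (P * (d' * (d' - 1)))⁻¹) * P = (d' - 1)⁻¹ := by
        rw [hinc2]
        calc P⁻¹ * (d' - 1)⁻¹ * P = (d' - 1)⁻¹ * (P⁻¹ * P) := by ring
        _ = (d' - 1)⁻¹ := by rw [hPinv, mul_one]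
      have h3 : x - Cg d n ≤ (d' * P)⁻¹ + (P * (d' * (d' - 1)))⁻¹ := by linarith
      have h4 := mul_le_mul_of_nonneg_right h3 hPpos.le
      rwa [h2] at h4
    have ht_pos : 0 < t := lt_trans (by positivity) ht_lb
    -- compute the (n+1)-st digit
    have hinv_lb : d' - 1 ≤ t⁻¹ := by
      have := inv_anti₀ ht_pos ht_ub
      rwa [inv_inv] at this
    have hinv_ub : t⁻¹ < d' := by
      have h1 : t⁻¹ < (d'⁻¹)⁻¹ := by
        apply inv_strictAnti₀ (by positivity) ht_lb
      rwa [inv_inv] at h1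
    have hfloor : ⌊t⁻¹⌋₊ = d (n+1) - 1 := by
      rw [Nat.floor_eq_iff (by positivity)]
      constructor
      · rw [Nat.cast_sub (by omega : 1 ≤ d (n+1))]
        simpa using hinv_lb
      · rw [Nat.cast_sub (by omega : 1 ≤ d (n+1))]
        push_cast
        simpa using hinv_ub
    have hdnew : lurothD x (n+1) = d (n+1) := by
      unfold lurothD
      simp only [Nat.add_sub_cancel]
      rw [← htdef, hfloor]
      omega
    refine ⟨hx01, ?_⟩
    intro i hi
    simp only [Finset.mem_Icc] at hi
    rcases eq_or_lt_of_le hi.2 with h | h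
    · rw [h]; exact hdnew
    · exact hdig i (by simp only [Finset.mem_Icc]; omega)

lemma Pg_eq_Qg {d : ℕ → ℕ} {n : ℕ} (hn : 1 ≤ n) : Pg d n = Qg d n * (d n - 1) := by
  unfold Pg Qg
  rw [← Finset.Ico_add_one_right_eq_Icc, Finset.prod_Ico_succ_top hn]
  ring

lemma Qg_ge_pow {d : ℕ → ℕ} {n : ℕ} (hn : 1 ≤ n) (hd : ∀ i ∈ Finset.Icc 1 n, 2 ≤ d i) :
    2 ^ n ≤ Qg d n := by
  unfold Qg
  have h1 : 2 ^ (n - 1) ≤ ∏ j ∈ Finset.Ico 1 n, d j * (d j - 1) := by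
    have : ∏ j ∈ Finset.Ico 1 n, 2 ≤ ∏ j ∈ Finset.Ico 1 n, d j * (d j - 1) := by
      apply Finset.prod_le_prod'
      intro i hi
      simp only [Finset.mem_Ico] at hi
      have := hd i (by simp only [Finset.mem_Icc]; omega)
      have h2 : 1 ≤ d i - 1 := by omega
      calc 2 ≤ d i * 1 := by omega
      _ ≤ d i * (d i - 1) := Nat.mul_le_mul_left _ h2
    simpa [Nat.card_Ico] using this
  have h2 : 2 ≤ d n := hd n (by simp [hn])
  calc 2 ^ n = 2 * 2 ^ (n - 1) := by
        rw [← pow_succ']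
        congr 1
        omega
  _ ≤ d n * ∏ j ∈ Finset.Ico 1 n, d j * (d j - 1) := Nat.mul_le_mul h2 h1

lemma luroth_lb {x : ℝ} (hx : x ∈ Set.Ioc (0:ℝ) 1) (n : ℕ) : Cg (lurothD x) n < x := by
  have hid := luroth_ident hx n
  have ht := (lurothT_iter_mem hx n).1
  have hP : (0:ℝ) < (Pg (lurothD x) n : ℝ) := by
    exact_mod_cast Pg_pos (fun i _ => lurothD_ge hx i)
  have : (0:ℝ) < lurothT^[n] x * ((Pg (lurothD x) n : ℝ))⁻¹ := by positivity
  linarith [hid]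

theorem stmt16 (ψ : ℕ → ℝ) (hψ : ∀ q, ψ q ∈ Set.Ioc (0:ℝ) 1)
    (h : 1 < liminf (fun q : ℕ => -Real.log (ψ q) / Real.log q) atTop) :
    (∃ q₀ : ℕ, ∀ q : ℕ, q₀ < q → ψ q < 1 / (q : ℝ)) ∧
    Lpsi ψ = {x : ℝ | ∀ Q₀ : ℕ, ∃ n : ℕ, 1 ≤ n ∧ ∃ d : ℕ → ℕ,
      (∀ i ∈ Finset.Icc 1 n, 2 ≤ d i) ∧
      Q₀ ≤ d n * ∏ j ∈ Finset.Ico 1 n, d j * (d j - 1) ∧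
      x ∈ Set.Ioo
        (∑ k ∈ Finset.Icc 1 n,
          ((d k * ∏ j ∈ Finset.Ico 1 k, d j * (d j - 1) : ℕ) : ℝ)⁻¹)
        ((∑ k ∈ Finset.Icc 1 n,
          ((d k * ∏ j ∈ Finset.Ico 1 k, d j * (d j - 1) : ℕ) : ℝ)⁻¹) +
          ψ (d n * ∏ j ∈ Finset.Ico 1 n, d j * (d j - 1)) /
            ((d n * ∏ j ∈ Finset.Ico 1 n, d j * (d j - 1) : ℕ) : ℝ))} := by
  -- Part 1
  have hbdd : IsBoundedUnder (· ≥ ·) atTop (fun q : ℕ => -Real.log (ψ q) / Real.log q) := by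
    refine ⟨0, Filter.eventually_map.mpr ?_⟩
    filter_upwards [eventually_ge_atTop 1] with q hq
    have h0 := (hψ q).1
    have h1 := (hψ q).2
    have : -Real.log (ψ q) / Real.log q ≥ 0 := by
      apply div_nonneg
      · simp only [neg_nonneg]
        exact Real.log_nonpos h0.le h1
      · exact Real.log_nonneg (by exact_mod_cast hq)
    exact this
  have hev := eventually_lt_of_lt_liminf h hbdd
  obtain ⟨q₁, hq₁⟩ := eventually_atTop.mp hev
  set q₀ : ℕ := max q₁ 1 with hq₀def
  have hpart1 : ∀ q : ℕ, q₀ < q → ψ q < 1 / (q : ℝ) := by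
    intro q hq
    have hq2 : 2 ≤ q := by omega
    have hlogq : 0 < Real.log q := Real.log_pos (by exact_mod_cast (by omega : 1 < q))
    have hfr := hq₁ q (by omega)
    have hlt : Real.log q < -Real.log (ψ q) := by
      nlinarith [mul_lt_mul_of_pos_right hfr hlogq,
        div_mul_cancel₀ (-Real.log (ψ q)) hlogq.ne']
    have hψ0 := (hψ q).1
    have hinvq : (0:ℝ) < 1 / (q:ℝ) := by positivity
    have hloglt : Real.log (ψ q) < Real.log (1 / (q:ℝ)) := by
      rw [Real.log_div one_ne_zero (by positivity : ((q:ℝ)) ≠ 0)]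
      simp only [Real.log_one, zero_sub]
      linarith
    exact (Real.log_lt_log_iff hψ0 hinvq).mp hloglt
  refine ⟨⟨q₀, hpart1⟩, ?_⟩
  -- Part 2
  ext x
  simp only [Lpsi, Set.mem_setOf_eq, Set.mem_sep_iff]
  constructor
  · rintro ⟨hx01, hN⟩ Q₀
    obtain ⟨n, hnN, hn1, hlt⟩ := hN Q₀
    refine ⟨n, hn1, lurothD x, fun i _ => lurothD_ge hx01 i, ?_, ?_, ?_⟩
    · have h1 : Q₀ < 2 ^ Q₀ := Nat.lt_two_pow_self (n := Q₀)
      have h2 : 2 ^ Q₀ ≤ 2 ^ n := Nat.pow_le_pow_right (by omega) hnN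
      have h3 := Qg_ge_pow hn1 (fun i _ => lurothD_ge hx01 i)
      show Q₀ ≤ Qg (lurothD x) n
      omega
    · exact luroth_lb hx01 n
    · show x < lurothConv x n + ψ (lurothQ x n) / ((lurothQ x n : ℕ) : ℝ)
      linarith [(abs_lt.mp hlt).2]
  · intro hx
    have key : ∀ (n : ℕ) (d : ℕ → ℕ), 1 ≤ n → (∀ i ∈ Finset.Icc 1 n, 2 ≤ d i) →
        q₀ < Qg d n →
        x ∈ Set.Ioo (Cg d n) (Cg d n + ψ (Qg d n) / ((Qg d n : ℕ) : ℝ)) →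
        x ∈ Set.Ioc (0:ℝ) 1 ∧ lurothConv x n = Cg d n ∧ lurothQ x n = Qg d n := by
      intro n d hn hd hq hIoo
      have hQpos : 0 < Qg d n := Qg_pos hn hd
      have hQr : (0:ℝ) < (Qg d n : ℝ) := by exact_mod_cast hQpos
      have hψlt : ψ (Qg d n) < 1 / (Qg d n : ℝ) := hpart1 _ hq
      have hPle : (Pg d n : ℕ) ≤ Qg d n * Qg d n := by
        rw [Pg_eq_Qg hn]
        apply Nat.mul_le_mul_left
        have h2 : 2 ≤ d n := hd n (by simp [hn])
        have h3 : d n ≤ Qg d n := by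
          unfold Qg
          have hone : 1 ≤ ∏ j ∈ Finset.Ico 1 n, d j * (d j - 1) := by
            apply Nat.one_le_iff_ne_zero.mpr
            apply Finset.prod_ne_zero_iff.mpr
            intro i hi
            simp only [Finset.mem_Ico] at hi
            have := hd i (by simp only [Finset.mem_Icc]; omega)
            exact Nat.mul_ne_zero (by omega) (by omega)
          calc d n = d n * 1 := by ring
          _ ≤ _ := Nat.mul_le_mul_left _ hone
        omega
      have hPpos : 0 < Pg d n := Pg_pos hd
      have hPr : (0:ℝ) < (Pg d n : ℝ) := by exact_mod_cast hPpos
      have hub : x ≤ Cg d n + ((Pg d n : ℕ) : ℝ)⁻¹ := by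
        have h1 : ψ (Qg d n) / (Qg d n : ℝ) ≤ ((Qg d n : ℝ) * (Qg d n : ℝ))⁻¹ := by
          rw [div_le_iff₀ hQr, mul_inv]
          calc ψ (Qg d n) ≤ (Qg d n : ℝ)⁻¹ := by
                rw [← one_div]; exact hψlt.le
          _ = (Qg d n : ℝ)⁻¹ * ((Qg d n : ℝ)⁻¹ * (Qg d n : ℝ)) := by
                rw [inv_mul_cancel₀ hQr.ne', mul_one]
          _ = (Qg d n : ℝ)⁻¹ * (Qg d n : ℝ)⁻¹ * (Qg d n : ℝ) := by ring
        have h2 : ((Qg d n : ℝ) * (Qg d n : ℝ))⁻¹ ≤ ((Pg d n : ℕ) : ℝ)⁻¹ := by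
          apply inv_anti₀ hPr
          exact_mod_cast hPle
        have h3 := hIoo.2
        linarith
      obtain ⟨hx01, hdig⟩ := luroth_determine n d hd x hIoo.1 hub
      exact ⟨hx01, Cg_congr hdig, Qg_congr hdig hn⟩
    have hx01 : x ∈ Set.Ioc (0:ℝ) 1 := by
      obtain ⟨n, hn1, d, hd, hQ₀, hIoo⟩ := hx (q₀ + 1)
      have hQg : q₀ + 1 ≤ Qg d n := hQ₀
      have hIoo' : x ∈ Set.Ioo (Cg d n) (Cg d n + ψ (Qg d n) / ((Qg d n : ℕ) : ℝ)) := hIoo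
      exact (key n d hn1 hd (by omega) hIoo').1
    refine ⟨hx01, ?_⟩
    intro N
    set M : ℕ := (Finset.range (N+1)).sup (lurothQ x) with hM
    obtain ⟨n, hn1, d, hd, hQ₀, hIoo⟩ := hx (max (q₀ + 1) (M + 1))
    have hQg : max (q₀ + 1) (M + 1) ≤ Qg d n := hQ₀
    have hIoo' : x ∈ Set.Ioo (Cg d n) (Cg d n + ψ (Qg d n) / ((Qg d n : ℕ) : ℝ)) := hIoo
    obtain ⟨-, hconv, hQeq⟩ := key n d hn1 hd (by omega) hIoo'
    refine ⟨n, ?_, hn1, ?_⟩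
    · by_contra hcon
      push_neg at hcon
      have hle : lurothQ x n ≤ M :=
        Finset.le_sup (by simp only [Finset.mem_range]; omega)
      omega
    · rw [hconv, hQeq]
      have hQpos : 0 < Qg d n := Qg_pos hn1 hd
      have hψpos : 0 < ψ (Qg d n) / ((Qg d n : ℕ) : ℝ) := by
        have h1 := (hψ (Qg d n)).1
        have h2 : (0:ℝ) < ((Qg d n : ℕ) : ℝ) := by exact_mod_cast hQpos
        positivity
      rw [abs_lt]
      exact ⟨by linarith [hIoo'.1], by linarith [hIoo'.2]⟩
end

section
/- Let ψ: ℕ → (0,1/2] be non-increasing. If the series Σ_{q=1}^∞ (−ψ(q) log ψ(q))/q diverges, then the series Σ_{q=1}^∞ ψ(q) diverges. -/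
open MeasureTheory Filter Set

theorem stmt19 (ψ : ℕ → ℝ) (hψ : ∀ q, ψ q ∈ Set.Ioc (0:ℝ) (1/2)) (hmono : Antitone ψ)
    (hdiv : ¬ Summable (fun q : ℕ => -ψ q * Real.log (ψ q) / (q : ℝ))) :
    ¬ Summable ψ := by
  intro hsum
  apply hdiv
  have h2 : Summable (fun q : ℕ => ψ q + 1 / (q : ℝ) ^ 2) :=
    hsum.add ((Real.summable_one_div_nat_pow).2 one_lt_two)
  refine Summable.of_nonneg_of_le (fun q => ?_) (fun q => ?_) h2
  · have h1 := (hψ q).1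
    have hlog : Real.log (ψ q) ≤ 0 :=
      Real.log_nonpos (le_of_lt h1) (le_trans (hψ q).2 (by norm_num))
    have : 0 ≤ -ψ q * Real.log (ψ q) := by nlinarith
    exact div_nonneg this (Nat.cast_nonneg q)
  · rcases Nat.eq_zero_or_pos q with hq | hq
    · subst hq
      simp only [Nat.cast_zero, div_zero]
      have := (hψ 0).1
      norm_num
      linarith
    · have hqR : (0:ℝ) < q := by exact_mod_cast hq
      have h1 := (hψ q).1
      set t := ψ q with ht
      have hst : 0 < Real.sqrt t := Real.sqrt_pos.2 h1
      -- -t log t ≤ 2 √t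
      have hlog : -Real.log t ≤ 2 / Real.sqrt t := by
        have : Real.log t = 2 * Real.log (Real.sqrt t) := by
          rw [Real.log_sqrt h1.le]; ring
        rw [this]
        have h3 : Real.log (Real.sqrt t)⁻¹ ≤ (Real.sqrt t)⁻¹ :=
          le_trans (Real.log_le_sub_one_of_pos (inv_pos.2 hst)) (by linarith)
        rw [Real.log_inv] at h3
        rw [div_eq_mul_inv]
        nlinarith
      have hkey : -t * Real.log t ≤ 2 * Real.sqrt t := by
        have : t / Real.sqrt t = Real.sqrt t := by
          rw [eq_comm, eq_div_iff hst.ne', Real.mul_self_sqrt h1.le]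
        calc -t * Real.log t = t * (-Real.log t) := by ring
          _ ≤ t * (2 / Real.sqrt t) := by
              exact mul_le_mul_of_nonneg_left hlog h1.le
          _ = 2 * (t / Real.sqrt t) := by ring
          _ = 2 * Real.sqrt t := by rw [this]
      have hAM : 2 * Real.sqrt t * (1 / (q:ℝ)) ≤ t + 1 / (q:ℝ)^2 := by
        have hsq := sq_nonneg (Real.sqrt t - 1 / (q:ℝ))
        have h4 : Real.sqrt t ^ 2 = t := Real.sq_sqrt h1.le
        have hq2 : (1 / (q:ℝ))^2 = 1 / (q:ℝ)^2 := by rw [div_pow, one_pow]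
        nlinarith [hsq, h4, hq2]
      calc -t * Real.log t / q ≤ 2 * Real.sqrt t / q := by
            gcongr
        _ = 2 * Real.sqrt t * (1 / (q:ℝ)) := by ring
        _ ≤ t + 1 / (q:ℝ)^2 := hAM
end
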